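/- arXiv:2002.00587 — 3 statements merged into one kernel-verified Lean document; each statement's English description precedes it below -/
import Mathlib

section
/- Let k ≥ 1 and let f : ℝ → ℝ be a function such that for every choice of real numbers h₁, …, h_k the mixed difference Δ_{h₁…h_k} f is a continuous function on ℝ. Then there exist a continuous function g : ℝ → ℝ and a polynomial function H : ℝ → ℝ of order k with H(0) = 0 such that f = g + H. -/
open Topology Filter MeasureTheory intervalIntegral Function


/-- The simple difference operator `Δ_h f (x) = f (x + h) - f x`. -/
def simpleDiff (h : ℝ) (f : ℝ → ℝ) : ℝ → ℝ := fun x => f (x + h) - f x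

/-- The mixed difference operator `Δ_{h₁ … h_m} f := Δ_{h_m} (Δ_{h₁ … h_{m-1}} f)`. -/
def mixedDiff : (m : ℕ) → (Fin m → ℝ) → (ℝ → ℝ) → (ℝ → ℝ)
  | 0, _, f => f
  | m + 1, h, f => simpleDiff (h (Fin.last m)) (mixedDiff m (fun i => h i.castSucc) f)

/-- `f` is a polynomial function of order `k` if `Δ_h^{k+1} f = 0` for every `h`. -/
def IsPolynomialFunction (k : ℕ) (f : ℝ → ℝ) : Prop :=
  ∀ x h : ℝ, (simpleDiff h)^[k + 1] f x = 0

namespace DP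

def D : List ℝ → (ℝ → ℝ) → (ℝ → ℝ)
  | [], f => f
  | a :: l, f => D l (simpleDiff a f)

@[simp] lemma D_nil (f : ℝ → ℝ) : D [] f = f := rfl
@[simp] lemma D_cons (a : ℝ) (l : List ℝ) (f : ℝ → ℝ) :
    D (a :: l) f = D l (simpleDiff a f) := rfl

lemma simpleDiff_comm (a b : ℝ) (f : ℝ → ℝ) :
    simpleDiff a (simpleDiff b f) = simpleDiff b (simpleDiff a f) := by
  funext x; simp only [simpleDiff]; ring_nf

lemma D_append (l₁ l₂ : List ℝ) (f : ℝ → ℝ) : D (l₁ ++ l₂) f = D l₂ (D l₁ f) := by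
  induction l₁ generalizing f with
  | nil => rfl
  | cons a l ih => simp [D_cons, ih]

lemma D_simpleDiff (l : List ℝ) (a : ℝ) (f : ℝ → ℝ) :
    D l (simpleDiff a f) = simpleDiff a (D l f) := by
  induction l generalizing f with
  | nil => rfl
  | cons b l ih => rw [D_cons, simpleDiff_comm b a, ih, D_cons]

lemma D_concat (l : List ℝ) (a : ℝ) (f : ℝ → ℝ) :
    D (l ++ [a]) f = simpleDiff a (D l f) := by
  rw [D_append]; exact D_simpleDiff [] a (D l f) ▸ rfl

lemma D_concat_apply (l : List ℝ) (a : ℝ) (f : ℝ → ℝ) (x : ℝ) :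
    D (l ++ [a]) f x = D l f (x + a) - D l f x := by
  rw [D_concat]; rfl

lemma D_sub (l : List ℝ) (f g : ℝ → ℝ) :
    D l (fun x => f x - g x) = fun x => D l f x - D l g x := by
  induction l generalizing f g with
  | nil => rfl
  | cons a l ih =>
    simp only [D_cons]
    have : simpleDiff a (fun x => f x - g x)
        = fun x => simpleDiff a f x - simpleDiff a g x := by
      funext x; simp [simpleDiff]; ring
    rw [this, ih]

lemma D_add (l : List ℝ) (f g : ℝ → ℝ) :
    D l (fun x => f x + g x) = fun x => D l f x + D l g x := by
  induction l generalizing f g with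
  | nil => rfl
  | cons a l ih =>
    simp only [D_cons]
    have : simpleDiff a (fun x => f x + g x)
        = fun x => simpleDiff a f x + simpleDiff a g x := by
      funext x; simp [simpleDiff]; ring
    rw [this, ih]

lemma D_smul (l : List ℝ) (c : ℝ) (f : ℝ → ℝ) :
    D l (fun x => c * f x) = fun x => c * D l f x := by
  induction l generalizing f with
  | nil => rfl
  | cons a l ih =>
    simp only [D_cons]
    have : simpleDiff a (fun x => c * f x) = fun x => c * simpleDiff a f x := by
      funext x; simp [simpleDiff]; ring
    rw [this, ih]

lemma D_smul_apply (l : List ℝ) (C : ℝ) (f : ℝ → ℝ) (x : ℝ) :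
    D l (fun y => C * f y) x = C * D l f x := by rw [D_smul]

lemma D_zero (l : List ℝ) : D l (fun _ => (0:ℝ)) = fun _ => (0:ℝ) := by
  induction l with
  | nil => rfl
  | cons a l ih =>
    simp only [D_cons]
    have : simpleDiff a (fun _ => (0:ℝ)) = fun _ => (0:ℝ) := by
      funext x; simp [simpleDiff]
    rw [this, ih]

lemma D_continuous (l : List ℝ) {f : ℝ → ℝ} (hf : Continuous f) :
    Continuous (D l f) := by
  induction l generalizing f with
  | nil => exact hf
  | cons a l ih =>
    exact ih ((hf.comp (continuous_add_right a)).sub hf)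

lemma D_perm {l l' : List ℝ} (h : l.Perm l') : ∀ f : ℝ → ℝ, D l f = D l' f := by
  induction h with
  | nil => intro f; rfl
  | cons a _ ih => intro f; simp only [D_cons]; exact ih _
  | swap a b l => intro f; simp only [D_cons, simpleDiff_comm]
  | trans _ _ ih₁ ih₂ => intro f; rw [ih₁, ih₂]

lemma D_sum (l : List ℝ) {ι : Type*} (s : Finset ι) (F : ι → ℝ → ℝ) :
    D l (fun x => ∑ i ∈ s, F i x) = fun x => ∑ i ∈ s, D l (F i) x := by
  classical
  induction s using Finset.induction with
  | empty => simpa using D_zero l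
  | insert a s hni ih =>
    have h1 : (fun x => ∑ i ∈ insert a s, F i x)
        = fun x => F a x + ∑ i ∈ s, F i x := by
      funext x; rw [Finset.sum_insert hni]
    rw [h1, D_add, ih]
    funext x; rw [Finset.sum_insert hni]

/-- A function with all simple differences `0` is constant. -/
lemma eq_const_of_D_single_zero {g : ℝ → ℝ}
    (h : ∀ y x : ℝ, g (x + y) - g x = 0) : ∀ x, g x = g 0 := by
  intro x
  have := h x 0
  simp at this
  linarith

end DP



namespace DP

noncomputable section

/-- Partial sums `T n s = v s + v (s+1) + ... + v (s+n-1)` (with the usual convention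
for negative `n`), satisfying `T (n+1) s = T n s + v (s + n)`. -/
def T (v : ℝ → ℝ) : ℤ → ℝ → ℝ := fun n s =>
  if 0 ≤ n then ∑ i ∈ Finset.range n.toNat, v (s + i)
  else -∑ i ∈ Finset.range (-n).toNat, v (s + n + i)

lemma T_succ (v : ℝ → ℝ) (n : ℤ) (s : ℝ) : T v (n + 1) s = T v n s + v (s + n) := by
  rcases le_or_gt 0 n with hn | hn
  · have h1 : (0:ℤ) ≤ n + 1 := by omega
    have h2 : (n+1).toNat = n.toNat + 1 := by omega
    simp only [T, if_pos hn, if_pos h1, h2, Finset.sum_range_succ]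
    have : ((n.toNat : ℕ) : ℝ) = ((n : ℤ) : ℝ) := by
      exact_mod_cast Int.toNat_of_nonneg hn
    rw [this]
  · have h1 : ¬ (0:ℤ) ≤ n := by omega
    rcases eq_or_lt_of_le (by omega : n + 1 ≤ 0) with he | hl
    · -- n = -1
      have hn1 : n = -1 := by omega
      subst hn1
      simp only [T, if_pos (le_refl (0:ℤ)), if_neg h1]
      norm_num
    · have h2 : ¬ (0:ℤ) ≤ n + 1 := by omega
      simp only [T, if_neg h1, if_neg h2]
      have h3 : (-n).toNat = (-(n+1)).toNat + 1 := by omega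
      rw [h3, Finset.sum_range_succ']
      have e : ∀ i ∈ Finset.range (-(n+1)).toNat,
          v (s + (n:ℝ) + ((i+1 : ℕ) : ℝ)) = v (s + ((n+1 : ℤ) : ℝ) + (i : ℝ)) := by
        intro i _; congr 1; push_cast; ring
      rw [Finset.sum_congr rfl e]
      have e0 : s + (n:ℝ) + ((0:ℕ):ℝ) = s + (n:ℝ) := by push_cast; ring
      rw [e0]
      ring

lemma T_shift (v : ℝ → ℝ) (n : ℤ) (s : ℝ) :
    T v n (s + 1) = T v n s + v (s + n) - v s := by
  induction n using Int.induction_on with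
  | zero => simp [T]
  | succ k ih =>
    rw [T_succ, T_succ, ih]
    push_cast
    have h1 : s + 1 + k = s + k + 1 := by ring
    rw [h1]; ring_nf
  | pred k ih =>
    have h1 : (-(k:ℤ) - 1) + 1 = -(k:ℤ) := by ring
    have e1 := T_succ v (-(k:ℤ) - 1) (s + 1)
    have e2 := T_succ v (-(k:ℤ) - 1) s
    rw [h1] at e1 e2
    push_cast at e1 e2 ih ⊢
    ring_nf at e1 e2 ih ⊢
    linarith

lemma T_continuous (v : ℝ → ℝ) (hv : Continuous v) (n : ℤ) : Continuous (T v n) := by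
  rcases le_or_gt 0 n with hn | hn
  · have : T v n = fun s => ∑ i ∈ Finset.range n.toNat, v (s + i) := by
      funext s; simp [T, hn]
    rw [this]
    exact continuous_finset_sum _ fun i _ => hv.comp (continuous_add_right _)
  · have : T v n = fun s => -∑ i ∈ Finset.range (-n).toNat, v (s + n + i) := by
      funext s; simp [T, not_le.mpr hn]
    rw [this]
    exact (continuous_finset_sum _ fun i _ =>
      hv.comp ((continuous_add_right _).comp (continuous_add_right _))).neg

/-- Continuous coboundary: `coB v x = fract x * v 0 + T v ⌊x⌋ (fract x)`. -/
def coB (v : ℝ → ℝ) : ℝ → ℝ := fun x => Int.fract x * v 0 + T v ⌊x⌋ (Int.fract x)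

lemma coB_step (v : ℝ → ℝ) (x : ℝ) : coB v (x + 1) - coB v x = v x := by
  have h1 : ⌊x + 1⌋ = ⌊x⌋ + 1 := by
    simpa using Int.floor_add_int x 1
  have h2 : Int.fract (x + 1) = Int.fract x := by
    simpa using Int.fract_add_int x 1
  simp only [coB, h1, h2, T_succ]
  have : Int.fract x + (⌊x⌋ : ℝ) = x := by
    rw [add_comm]; exact Int.floor_add_fract x
  rw [this]; ring

/-- The explicit local model `W n x = (x - n) * v 0 + T v n (x - n)`. -/
lemma coB_eq_on (v : ℝ → ℝ) (n : ℤ) (x : ℝ) (hx : x ∈ Set.Icc (n:ℝ) (n+1)) :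
    coB v x = (x - n) * v 0 + T v n (x - n) := by
  rcases eq_or_lt_of_le hx.2 with he | hl
  · -- x = n + 1
    have hfr : Int.fract x = 0 := by rw [he]; simpa using Int.fract_intCast (n+1)
    have hfl : ⌊x⌋ = n + 1 := by rw [he]; simpa using Int.floor_intCast (n+1)
    have hxn : x - n = 1 := by rw [he]; push_cast; ring
    rw [coB, hfr, hfl, hxn, T_succ]
    have h0 : T v n 1 = T v n 0 + v n - v 0 := by
      simpa using T_shift v n 0
    simp only [zero_add] at *
    rw [h0]
    push_cast
    ring
  · have hfl : ⌊x⌋ = n := by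
      rw [Int.floor_eq_iff]
      constructor
      · exact_mod_cast hx.1
      · exact_mod_cast hl
    have hfr : Int.fract x = x - n := by rw [Int.fract, hfl]
    rw [coB, hfl, hfr]

lemma coB_continuous (v : ℝ → ℝ) (hv : Continuous v) : Continuous (coB v) := by
  have key : ∀ n : ℤ, ContinuousOn (coB v) (Set.Icc (n:ℝ) (n+1)) := by
    intro n
    apply ContinuousOn.congr (f := fun x => (x - n) * v 0 + T v n (x - n))
    · exact (((continuous_sub_right _).mul continuous_const).add
        ((T_continuous v hv n).comp (continuous_sub_right _))).continuousOn
    · intro y hy; exact coB_eq_on v n y hy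
  rw [continuous_iff_continuousAt]
  intro x
  by_cases hx : (⌊x⌋ : ℝ) = x
  · -- x is an integer; glue left and right pieces
    rw [continuousAt_iff_continuous_left_right]
    constructor
    · -- left: use interval [⌊x⌋ - 1, ⌊x⌋]
      have h1 : x ∈ Set.Icc (((⌊x⌋ - 1 : ℤ)):ℝ) ((((⌊x⌋ - 1 : ℤ)):ℝ) + 1) := by
        constructor
        · push_cast; linarith [hx.symm.le]
        · push_cast; linarith [hx.ge]
      have h2 := (key (⌊x⌋ - 1) x h1)
      refine h2.mono_of_mem_nhdsWithin ?_
      have : Set.Icc (((⌊x⌋ - 1 : ℤ)):ℝ) ((((⌊x⌋ - 1 : ℤ)):ℝ) + 1) ∈ 𝓝[≤] x := by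
        apply Icc_mem_nhdsLE_of_mem
        constructor
        · push_cast; linarith [hx.ge]
        · push_cast; linarith [hx.le]
      exact this
    · have h1 : x ∈ Set.Icc ((⌊x⌋:ℤ):ℝ) (((⌊x⌋:ℤ):ℝ) + 1) := by
        constructor
        · exact hx.le
        · push_cast; linarith [hx.ge]
      have h2 := (key ⌊x⌋ x h1)
      refine h2.mono_of_mem_nhdsWithin ?_
      apply Icc_mem_nhdsGE_of_mem
      constructor
      · exact hx.le
      · push_cast; linarith [hx.ge]
  · -- x strictly inside (⌊x⌋, ⌊x⌋+1): coB agrees with model on an open set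
    have hlt : (⌊x⌋ : ℝ) < x := lt_of_le_of_ne (Int.floor_le x) hx
    have hub : x < (⌊x⌋ : ℝ) + 1 := Int.lt_floor_add_one x
    have hopen : Set.Ioo ((⌊x⌋:ℤ):ℝ) (((⌊x⌋:ℤ):ℝ)+1) ∈ nhds x :=
      (isOpen_Ioo).mem_nhds ⟨hlt, hub⟩
    have := (key ⌊x⌋ x ⟨Int.floor_le x, hub.le⟩)
    exact this.continuousAt (Filter.mem_of_superset hopen Set.Ioo_subset_Icc_self)

end

end DP



namespace DP

noncomputable section

/-- Integral of a continuous 1-periodic function over a unit interval is shift invariant. -/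
lemma per_shift (g : ℝ → ℝ) (hg : Continuous g) (hp : ∀ x, g (x + 1) = g x) (b : ℝ) :
    (∫ t in (0:ℝ)..1, g (t + b)) = ∫ t in (0:ℝ)..1, g t := by
  rw [intervalIntegral.integral_comp_add_right g b]
  have hper : Function.Periodic g 1 := hp
  have h := hper.intervalIntegral_add_eq b 0
  simpa [zero_add, add_comm] using h

private def Wfun (w : ℝ → ℝ) (x h : ℝ) : ℝ := w (x + h) - w x - w h + w 0

private lemma Wfun_symm (w : ℝ → ℝ) (x h : ℝ) : Wfun w x h = Wfun w h x := by
  simp only [Wfun]; ring_nf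

/-- The key analytic lemma: a 1-periodic function whose simple differences are all
continuous differs from `x ↦ ∫ t in 0..1, (w (t+x) - w t)` by a continuous function. -/
lemma star (w : ℝ → ℝ) (hper : ∀ x, w (x + 1) = w x)
    (hd : ∀ y : ℝ, Continuous (fun x => w (x + y) - w x)) :
    Continuous (fun x => w x - ∫ t in (0:ℝ)..1, (w (t + x) - w t)) := by
  set cI : ℝ → ℝ := fun x => ∫ t in (0:ℝ)..1, (w (t + x) - w t) with hcI
  have hdc : ∀ y : ℝ, Continuous (fun t => w (t + y) - w t) := hd
  have hc0 : cI 0 = 0 := by simp [hcI]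
  -- W basics
  have hWx : ∀ h, Continuous (fun x => Wfun w x h) := by
    intro h
    have : (fun x => Wfun w x h) = fun x => (w (x + h) - w x) - (w h - w 0) := by
      funext x; simp [Wfun]; ring
    rw [this]; exact (hd h).sub continuous_const
  have hWh : ∀ x, Continuous (fun h => Wfun w x h) := by
    intro x
    have : (fun h => Wfun w x h) = fun h => Wfun w h x := by
      funext h; exact Wfun_symm w x h
    rw [this]; exact hWx x
  have hWper : ∀ x h, Wfun w (x + 1) h = Wfun w x h := by
    intro x h
    simp only [Wfun]
    have h1 : x + 1 + h = (x + h) + 1 := by ring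
    rw [h1, hper, hper]
  have hWperH : ∀ x h, Wfun w x (h + 1) = Wfun w x h := by
    intro x h; rw [Wfun_symm, hWper, Wfun_symm]
  -- periodic reduction
  have hWfract : ∀ x h, Wfun w x h = Wfun w (Int.fract x) h := by
    intro x h
    have hp : Function.Periodic (fun x => Wfun w x h) 1 := fun t => hWper t h
    have h3 : Wfun w (x - (⌊x⌋:ℝ) * 1) h = Wfun w x h := hp.sub_int_mul_eq ⌊x⌋
    rw [mul_one] at h3
    rw [Int.fract]
    exact h3.symm
  have hWfractH : ∀ x h, Wfun w x h = Wfun w x (Int.fract h) := by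
    intro x h; rw [Wfun_symm, hWfract, Wfun_symm]
  -- pointwise bound in x for each h
  have hbd : ∀ h : ℝ, ∃ m : ℕ, ∀ x, |Wfun w x h| ≤ m := by
    intro h
    obtain ⟨C, hC⟩ := (isCompact_Icc (a := (0:ℝ)) (b := 1)).exists_bound_of_continuousOn
      ((hWx h).continuousOn)
    refine ⟨⌈C⌉₊, fun x => ?_⟩
    rw [hWfract]
    have hx : Int.fract x ∈ Set.Icc (0:ℝ) 1 :=
      ⟨Int.fract_nonneg x, (Int.fract_lt_one x).le⟩
    calc |Wfun w (Int.fract x) h| ≤ C := hC _ hx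
      _ ≤ ⌈C⌉₊ := Nat.le_ceil C
  -- Baire
  have hbaire : ∃ M : ℕ, (interior {h : ℝ | ∀ x, |Wfun w x h| ≤ M}).Nonempty := by
    apply nonempty_interior_of_iUnion_of_closed
    · intro m
      have : {h : ℝ | ∀ x, |Wfun w x h| ≤ m} = ⋂ x : ℝ, {h | |Wfun w x h| ≤ m} := by
        ext h; simp
      rw [this]
      exact isClosed_iInter fun x =>
        isClosed_le ((hWh x).abs) continuous_const
    · ext h
      simp only [Set.mem_iUnion, Set.mem_univ, iff_true]
      obtain ⟨m, hm⟩ := hbd h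
      exact ⟨m, fun x => hm x⟩
  obtain ⟨M, h₀, hh₀⟩ := hbaire
  rw [mem_interior_iff_mem_nhds, Metric.mem_nhds_iff] at hh₀
  obtain ⟨ε, hε, hball⟩ := hh₀
  have hMb : ∀ h ∈ Metric.ball h₀ ε, ∀ x, |Wfun w x h| ≤ M := fun h hh x => (hball hh) x
  -- difference spreading
  have Pdiff : ∀ (a b Ca Cb : ℝ), (∀ x, |Wfun w x a| ≤ Ca) → (∀ x, |Wfun w x b| ≤ Cb) →
      ∀ x, |Wfun w x (a - b)| ≤ 2*Ca + 2*Cb := by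
    intro a b Ca Cb ha hb x
    have idt : Wfun w x (a-b)
        = Wfun w (x-b) a - Wfun w (x-b) b + (Wfun w (-b) b - Wfun w (-b) a) := by
      simp only [Wfun]; ring_nf
    have e1 := abs_le.mp (ha (x-b))
    have e2 := abs_le.mp (hb (x-b))
    have e3 := abs_le.mp (hb (-b))
    have e4 := abs_le.mp (ha (-b))
    rw [idt, abs_le]
    constructor <;> linarith [e1.1, e1.2, e2.1, e2.2, e3.1, e3.2, e4.1, e4.2]
  have Psmall : ∀ s : ℝ, |s| < 2*ε → ∀ x, |Wfun w x s| ≤ 4*M := by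
    intro s hs x
    have habs : |s/2| < ε := by
      rw [abs_div]; simp only [abs_two]; linarith
    have ha : h₀ + s/2 ∈ Metric.ball h₀ ε := by
      simp only [Metric.mem_ball, Real.dist_eq]
      simpa using habs
    have hb : h₀ - s/2 ∈ Metric.ball h₀ ε := by
      simp only [Metric.mem_ball, Real.dist_eq]
      calc |h₀ - s/2 - h₀| = |(-(s/2))| := by ring_nf
        _ = |s/2| := by rw [abs_neg]
        _ < ε := habs
    have := Pdiff (h₀ + s/2) (h₀ - s/2) M M (hMb _ ha) (hMb _ hb) x
    have harg : h₀ + s/2 - (h₀ - s/2) = s := by ring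
    rw [harg] at this
    linarith
  -- chain to cover [-1,1]
  have Pchain : ∀ n : ℕ, ∃ C : ℝ, 0 ≤ C ∧
      ∀ h : ℝ, |h| ≤ (n+1) * ε → ∀ x, |Wfun w x h| ≤ C := by
    intro n
    induction n with
    | zero =>
      refine ⟨4*M, by positivity, fun h hh x => Psmall h ?_ x⟩
      have : ((0:ℕ)+1) * ε = ε := by norm_num
      rw [this] at hh
      linarith
    | succ n ih =>
      obtain ⟨C, hC0, hC⟩ := ih
      refine ⟨2*C + 16*M, by positivity, fun h hh x => ?_⟩
      by_cases hcase : |h| ≤ (n+1) * ε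
      · have := hC h hcase x; linarith
      · push_neg at hcase
        set s : ℝ := if 0 ≤ h then ε else -ε with hs
        have hsabs : |s| = ε := by
          rw [hs]; split_ifs <;> simp [abs_of_pos hε, abs_of_neg, hε] <;>
            rw [abs_neg, abs_of_pos hε]
        have hh' : |h - s| ≤ (n+1) * ε := by
          rw [hs]
          rcases le_or_gt 0 h with hpos | hneg
          · rw [if_pos hpos]
            rw [abs_of_nonneg hpos] at hcase hh
            rw [abs_le]
            push_cast at hcase hh ⊢
            constructor <;> nlinarith
          · rw [if_neg (not_le.mpr hneg)]
            rw [abs_of_neg hneg] at hcase hh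
            rw [abs_le]
            push_cast at hcase hh ⊢
            constructor <;> nlinarith
        -- h = (h - s) - (-s)
        have hP1 := hC (h - s) hh'
        have hP2 : ∀ x, |Wfun w x (-s)| ≤ 2*(4*M) := by
          have h0 : ∀ x, |Wfun w x 0| ≤ 0 := by
            intro x; simp [Wfun]
          have := Pdiff 0 s 0 (4*M) h0 (Psmall s (by rw [hsabs]; linarith))
          intro x
          have h2 := this x
          have : (0:ℝ) - s = -s := by ring
          rw [this] at h2
          linarith
        have := Pdiff (h - s) (-s) C (2*(4*M)) hP1 hP2 x
        have harg : h - s - (-s) = h := by ring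
        rw [harg] at this
        linarith
  -- global bound
  have hglob : ∃ Mg : ℝ, ∀ x h, |Wfun w x h| ≤ Mg := by
    set N : ℕ := ⌈1/ε⌉₊ with hN
    obtain ⟨C, hC0, hC⟩ := Pchain N
    refine ⟨C, fun x h => ?_⟩
    rw [hWfractH]
    apply hC
    have h1 : |Int.fract h| ≤ 1 := by
      rw [abs_of_nonneg (Int.fract_nonneg h)]
      exact (Int.fract_lt_one h).le
    have h2 : (1:ℝ) ≤ (N+1) * ε := by
      have : (1/ε) ≤ (N:ℝ) := Nat.le_ceil _
      have h3 : (1/ε) * ε ≤ (N:ℝ) * ε := by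
        apply mul_le_mul_of_nonneg_right this hε.le
      rw [one_div_mul_cancel hε.ne'] at h3
      nlinarith
    linarith
  obtain ⟨Mg, hMg⟩ := hglob
  -- mean identity : ∫ h in 0..1, W x h = cI x + (w 0 - w x)
  have hmean : ∀ x, (∫ h in (0:ℝ)..1, Wfun w x h) = cI x + (w 0 - w x) := by
    intro x
    have hsplit : (fun h => Wfun w x h) = fun h => (w (h + x) - w h) + (w 0 - w x) := by
      funext h; simp only [Wfun]; ring_nf
    rw [hsplit]
    rw [intervalIntegral.integral_add ((hdc x).intervalIntegrable 0 1)
      (intervalIntegrable_const)]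
    simp [hcI]
  -- DCT: continuity of x ↦ ∫ h in 0..1, W x h
  have hcont : Continuous (fun x => ∫ h in (0:ℝ)..1, Wfun w x h) := by
    rw [continuous_iff_continuousAt]
    intro x₀
    have := intervalIntegral.tendsto_integral_filter_of_dominated_convergence
      (μ := volume) (a := (0:ℝ)) (b := 1) (F := fun x h => Wfun w x h)
      (f := fun h => Wfun w x₀ h) (l := 𝓝 x₀)
      (fun _ => Mg)
      (Eventually.of_forall fun x => ((hWh x).aestronglyMeasurable).restrict)
      (Eventually.of_forall fun x => (ae_of_all _ fun h _ => by
        simpa [Real.norm_eq_abs] using hMg x h))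
      (intervalIntegrable_const)
      (ae_of_all _ fun h _ => ((hWx h).tendsto x₀))
    exact this
  -- conclude
  have hrepr : (fun x => w x - cI x)
      = fun x => w 0 - (∫ h in (0:ℝ)..1, Wfun w x h) := by
    funext x
    have := hmean x
    linarith
  rw [show (fun x => w x - ∫ t in (0:ℝ)..1, (w (t + x) - w t)) = fun x => w x - cI x from rfl,
    hrepr]
  exact continuous_const.sub hcont

end

end DP


open Function

namespace DP

lemma getD_append_lt (l l' : List ℝ) (t : ℕ) (h : t < l.length) :
    (l ++ l').getD t 0 = l.getD t 0 := by
  induction l generalizing t with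
  | nil => simp at h
  | cons a l ih =>
    cases t with
    | zero => rfl
    | succ t => simpa using ih t (by simpa using h)

lemma getD_concat_self (l : List ℝ) (a : ℝ) (l' : List ℝ) :
    (l ++ a :: l').getD l.length 0 = a := by
  induction l with
  | nil => rfl
  | cons b l ih => simpa using ih


variable {n : ℕ} (c : (Fin n → ℝ) → ℝ)

/-- vector with parameters `ps` in the first slots and `x` in the remaining slots -/
def pdVec (ps : List ℝ) (x : ℝ) : Fin n → ℝ :=
  fun t => if (t : ℕ) < ps.length then ps.getD t 0 else x

/-- partial diagonal -/
def PD (ps : List ℝ) : ℝ → ℝ := fun x => c (pdVec ps x)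

/-- vector with parameters `ps`, then `r` slots with value `x + a`, then `x`'s -/
def gVec (ps : List ℝ) (r : ℕ) (a x : ℝ) : Fin n → ℝ :=
  fun t => if (t : ℕ) < ps.length then ps.getD t 0
    else if (t : ℕ) < ps.length + r then x + a else x

section Machinery

variable (hadd : ∀ (v : Fin n → ℝ) (i : Fin n) (a b : ℝ),
    c (Function.update v i (a + b)) = c (Function.update v i a) + c (Function.update v i b))
  (hsym : ∀ (v : Fin n → ℝ) (σ : Equiv.Perm (Fin n)), c (v ∘ σ) = c v)

lemma pascal_sum (r : ℕ) (f : ℕ → ℝ) :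
    (∑ i ∈ Finset.range (r+1), (r.choose i : ℝ) * f i)
      + (∑ i ∈ Finset.range (r+1), (r.choose i : ℝ) * f (i+1))
    = ∑ i ∈ Finset.range (r+2), ((r+1).choose i : ℝ) * f i := by
  rw [Finset.sum_range_succ' (fun i => ((r+1).choose i : ℝ) * f i) (r+1)]
  have h1 : ∀ i : ℕ, (((r+1).choose (i+1) : ℕ) : ℝ) = (r.choose i : ℝ) + (r.choose (i+1) : ℝ) := by
    intro i
    rw [Nat.choose_succ_succ]
    push_cast
    ring
  have h2 : ∑ i ∈ Finset.range (r+1), (((r+1).choose (i+1) : ℕ) : ℝ) * f (i+1)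
      = (∑ i ∈ Finset.range (r+1), (r.choose i : ℝ) * f (i+1))
        + ∑ i ∈ Finset.range (r+1), (r.choose (i+1) : ℝ) * f (i+1) := by
    rw [← Finset.sum_add_distrib]
    exact Finset.sum_congr rfl fun i _ => by rw [h1 i]; ring
  rw [h2]
  have h3 : ∑ i ∈ Finset.range (r+1), (r.choose (i+1) : ℝ) * f (i+1)
      = ∑ i ∈ Finset.range r, (r.choose (i+1) : ℝ) * f (i+1) := by
    rw [Finset.sum_range_succ]
    simp
  have h4 : ∑ i ∈ Finset.range (r+1), (r.choose i : ℝ) * f i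
      = (r.choose 0 : ℝ) * f 0 + ∑ i ∈ Finset.range r, (r.choose (i+1) : ℝ) * f (i+1) := by
    rw [Finset.sum_range_succ' (fun i => (r.choose i : ℝ) * f i) r]
    ring
  rw [h3, h4]
  simp
  ring

include hadd hsym in
lemma EXPP (a : ℝ) : ∀ (r : ℕ) (ps : List ℝ), ps.length + r ≤ n → ∀ x,
    c (gVec ps r a x)
      = ∑ i ∈ Finset.range (r+1), (r.choose i : ℝ) * PD c (ps ++ List.replicate i a) x := by
  intro r
  induction r with
  | zero =>
    intro ps hps x
    have hv : gVec (n := n) ps 0 a x = pdVec ps x := by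
      funext t
      simp only [gVec, pdVec, Nat.add_zero]
      by_cases h : (t:ℕ) < ps.length <;> simp [h]
    simp [hv, PD]
  | succ r ih =>
    intro ps hps x
    have hj : ps.length < n := by omega
    have hjr : ps.length + r < n := by omega
    have fin_mk_val : ∀ (m : ℕ) (h : m < n), (((⟨m, h⟩ : Fin n)):ℕ) = m := fun _ _ => rfl
    set v : Fin n → ℝ := gVec ps (r+1) a x with hvdef
    set j : Fin n := ⟨ps.length, hj⟩ with hjdef
    set j' : Fin n := ⟨ps.length + r, hjr⟩ with hj'def
    have hjval : (j : ℕ) = ps.length := rfl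
    have hj'val : (j' : ℕ) = ps.length + r := rfl
    have hvj : Function.update v j (x + a) = v := by
      funext t
      rcases eq_or_ne t j with rfl | ht
      · rw [Function.update_self, hvdef]
        simp only [gVec, hjval]
        split_ifs with h1 h2
        · omega
        · rfl
        · omega
      · rw [Function.update_of_ne ht]
    have key : c v = c (Function.update v j x) + c (Function.update v j a) := by
      conv_lhs => rw [← hvj]
      exact hadd v j x a
    -- second term : parameters extended by a
    have claimA : Function.update v j a = gVec (ps ++ [a]) r a x := by
      funext t
      rcases eq_or_ne t j with rfl | ht
      · rw [Function.update_self]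
        simp only [gVec, List.length_append, List.length_singleton, hjval]
        have h8 : (ps ++ [a]).getD ps.length 0 = a := by
          simpa using getD_concat_self ps a []
        split_ifs with h1 h2
        · rw [h8]
        · omega
        · omega
      · rw [Function.update_of_ne ht]
        have htj : (t : ℕ) ≠ ps.length := fun h => ht (Fin.ext h)
        simp only [hvdef, gVec, List.length_append, List.length_singleton]
        rcases lt_or_gt_of_ne htj with hlt | hgt
        · rw [if_pos hlt, if_pos (show (t:ℕ) < ps.length + 1 by omega),
            getD_append_lt ps [a] t hlt]
        · rw [if_neg (show ¬ (t:ℕ) < ps.length by omega),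
            if_neg (show ¬ (t:ℕ) < ps.length + 1 by omega)]
          by_cases h2 : (t:ℕ) < ps.length + (r+1)
          · rw [if_pos h2, if_pos (show (t:ℕ) < ps.length + 1 + r by omega)]
          · rw [if_neg h2, if_neg (show ¬ (t:ℕ) < ps.length + 1 + r by omega)]
    -- first term : swap j and j'
    have claimB : (Function.update v j x) ∘ (Equiv.swap j j') = gVec ps r a x := by
      funext t
      simp only [Function.comp_apply]
      rcases eq_or_ne t j with rfl | htj
      · rw [Equiv.swap_apply_left]
        rcases eq_or_ne j' j with hje | hjne
        · rw [hje, Function.update_self]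
          have hr0 : r = 0 := by
            have h9 : (j':ℕ) = (j:ℕ) := by rw [hje]
            rw [hjval, hj'val] at h9
            omega
          simp only [gVec, hjval]
          rw [if_neg (show ¬ ps.length < ps.length by omega),
            if_neg (show ¬ ps.length < ps.length + r by omega)]
        · rw [Function.update_of_ne hjne]
          have hrpos : 0 < r := by
            rcases Nat.eq_zero_or_pos r with h0 | h
            · exact absurd (Fin.ext (by rw [hjval, hj'val, h0, Nat.add_zero])) hjne
            · exact h
          simp only [hvdef, gVec, hjval, hj'val]
          rw [if_neg (show ¬ ps.length + r < ps.length by omega),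
            if_pos (show ps.length + r < ps.length + (r+1) by omega),
            if_neg (show ¬ ps.length < ps.length by omega),
            if_pos (show ps.length < ps.length + r by omega)]
      · rcases eq_or_ne t j' with rfl | htj'
        · rw [Equiv.swap_apply_right, Function.update_self]
          simp only [gVec, hj'val]
          rw [if_neg (show ¬ ps.length + r < ps.length by omega),
            if_neg (show ¬ ps.length + r < ps.length + r by omega)]
        · rw [Equiv.swap_apply_of_ne_of_ne htj htj']
          rw [Function.update_of_ne htj]
          have ht1 : (t:ℕ) ≠ ps.length := fun h => htj (Fin.ext h)
          have ht2 : (t:ℕ) ≠ ps.length + r := fun h => htj' (Fin.ext h)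
          simp only [hvdef, gVec]
          by_cases hlt : (t:ℕ) < ps.length
          · rw [if_pos hlt, if_pos hlt]
          · rw [if_neg hlt, if_neg hlt]
            by_cases h2 : (t:ℕ) < ps.length + r
            · rw [if_pos (show (t:ℕ) < ps.length + (r+1) by omega), if_pos h2]
            · rw [if_neg (show ¬ (t:ℕ) < ps.length + (r+1) by omega), if_neg h2]
    have hB : c (Function.update v j x) = c (gVec ps r a x) := by
      rw [← hsym (Function.update v j x) (Equiv.swap j j'), claimB]
    rw [key, hB, claimA, ih ps (by omega) x, ih (ps ++ [a]) (by simp; omega) x]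
    have hrw : ∀ i : ℕ, (ps ++ [a]) ++ List.replicate i a = ps ++ List.replicate (i+1) a := by
      intro i
      rw [List.append_assoc]
      congr 1
    have h10 : ∑ i ∈ Finset.range (r+1),
          (r.choose i : ℝ) * PD c ((ps ++ [a]) ++ List.replicate i a) x
        = ∑ i ∈ Finset.range (r+1), (r.choose i : ℝ) * PD c (ps ++ List.replicate (i+1) a) x :=
      Finset.sum_congr rfl fun i _ => by rw [hrw i]
    rw [h10]
    exact pascal_sum r (fun i => PD c (ps ++ List.replicate i a) x)


include hadd hsym in
lemma PD_step (ps : List ℝ) (hps : ps.length ≤ n) (a : ℝ) :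
    simpleDiff a (PD c ps) = fun x => ∑ i ∈ Finset.Icc 1 (n - ps.length),
      (((n - ps.length).choose i : ℕ) : ℝ) * PD c (ps ++ List.replicate i a) x := by
  funext x
  set m : ℕ := n - ps.length with hm
  have hgv : pdVec (n := n) ps (x + a) = gVec ps m a x := by
    funext t
    simp only [pdVec, gVec]
    by_cases h1 : (t:ℕ) < ps.length
    · rw [if_pos h1, if_pos h1]
    · rw [if_neg h1, if_neg h1, if_pos (by have := t.isLt; omega)]
  have hexp := EXPP c hadd hsym a m ps (by omega) x
  rw [← hgv] at hexp
  have hrange : Finset.range (m+1) = insert 0 (Finset.Icc 1 m) := by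
    ext i; simp; omega
  rw [hrange, Finset.sum_insert (by simp)] at hexp
  simp only [Nat.choose_zero_right, Nat.cast_one, one_mul, List.replicate_zero,
    List.append_nil, PD] at hexp
  simp only [simpleDiff, PD]
  rw [hexp]
  ring

include hadd hsym in
lemma PD_D_zero : ∀ (l ps : List ℝ), ps.length ≤ n → n - ps.length < l.length →
    D l (PD c ps) = fun _ => 0 := by
  intro l
  induction l with
  | nil => intro ps h1 h2; simp at h2
  | cons a l ih =>
    intro ps h1 h2
    rw [D_cons, PD_step c hadd hsym ps h1 a, D_sum]
    funext x
    refine Finset.sum_eq_zero ?_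
    intro i hi
    rw [Finset.mem_Icc] at hi
    rw [D_smul_apply]
    have : D l (PD c (ps ++ List.replicate i a)) = fun _ => 0 := by
      apply ih
      · simp only [List.length_append, List.length_replicate]; omega
      · simp only [List.length_append, List.length_replicate, List.length_cons] at h2 ⊢
        omega
    rw [this]
    simp

include hadd hsym in
lemma PD_D_full : ∀ (l ps : List ℝ), ps.length + l.length = n → ∀ x y,
    D l (PD c ps) x = ((l.length.factorial : ℕ) : ℝ) * c (pdVec (ps ++ l) y) := by
  intro l
  induction l with
  | nil =>
    intro ps h1 x y
    simp only [List.length_nil, Nat.add_zero] at h1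
    simp only [D_nil, PD, List.append_nil, List.length_nil, Nat.factorial_zero,
      Nat.cast_one, one_mul]
    congr 1
    funext t
    simp only [pdVec]
    rw [if_pos (by have := t.isLt; omega), if_pos (by have := t.isLt; omega)]
  | cons a l ih =>
    intro ps h1 x y
    have hlen : ps.length ≤ n := by simp only [List.length_cons] at h1; omega
    rw [D_cons, PD_step c hadd hsym ps hlen a, D_sum]
    simp only
    set m : ℕ := n - ps.length with hm
    have hm1 : m = l.length + 1 := by simp only [List.length_cons] at h1; omega
    have hsplit : Finset.Icc 1 m = insert 1 (Finset.Icc 2 m) := by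
      ext i; simp; omega
    rw [hsplit, Finset.sum_insert (by simp)]
    have hrest : ∑ i ∈ Finset.Icc 2 m,
        D l (fun x => ((m.choose i : ℕ) : ℝ) * PD c (ps ++ List.replicate i a) x) x = 0 := by
      apply Finset.sum_eq_zero
      intro i hi
      rw [Finset.mem_Icc] at hi
      rw [D_smul_apply]
      have : D l (PD c (ps ++ List.replicate i a)) = fun _ => 0 := by
        apply PD_D_zero c hadd hsym
        · simp only [List.length_append, List.length_replicate]; omega
        · simp only [List.length_append, List.length_replicate]; omega
      rw [this]
      simp
    rw [hrest, add_zero, D_smul_apply]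
    simp only [List.replicate_one]
    rw [ih (ps ++ [a]) (by simp only [List.length_append, List.length_singleton]; omega) x y]
    have hl : (ps ++ [a]) ++ l = ps ++ (a :: l) := by
      rw [List.append_assoc]; rfl
    rw [hl]
    have : (m.choose 1 : ℝ) = (m : ℝ) := by rw [Nat.choose_one_right]
    rw [this]
    simp only [List.length_cons, Nat.factorial_succ, hm1]
    push_cast
    ring

end Machinery


end DP
namespace DP

noncomputable section

lemma ofFn_perm {n : ℕ} (v : Fin n → ℝ) (σ : Equiv.Perm (Fin n)) :
    (List.ofFn (v ∘ σ)).Perm (List.ofFn v) := by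
  rw [List.ofFn_eq_map, List.ofFn_eq_map]
  have h1 : (List.finRange n).map (v ∘ σ) = ((List.finRange n).map σ).map v := by
    rw [List.map_map]
  rw [h1]
  apply List.Perm.map
  apply List.perm_of_nodup_nodup_toFinset_eq
  · exact (List.nodup_finRange n).map σ.injective
  · exact List.nodup_finRange n
  · ext i
    simp only [List.mem_toFinset, List.mem_map, List.mem_finRange, true_and, iff_true]
    exact ⟨σ.symm i, by simp⟩

lemma ofFn_pdVec {n : ℕ} (L : List ℝ) (hL : L.length = n) (y : ℝ) :
    List.ofFn (pdVec (n := n) L y) = L := by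
  apply List.ext_getElem
  · simp [hL]
  · intro i h1 h2
    simp only [List.getElem_ofFn, pdVec]
    rw [if_pos (show i < L.length by omega)]
    exact List.getD_eq_getElem L 0 (by omega)

lemma update_comp_swap {n : ℕ} (v : Fin n → ℝ) (i j : Fin n) (z : ℝ) :
    (Function.update v i z) ∘ (Equiv.swap i j) = Function.update (v ∘ (Equiv.swap i j)) j z := by
  funext t
  simp only [Function.comp_apply]
  rcases eq_or_ne t j with rfl | htj
  · rw [Equiv.swap_apply_right, Function.update_self, Function.update_self]
  · rw [Function.update_of_ne htj]
    rcases eq_or_ne t i with rfl | hti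
    · rw [Equiv.swap_apply_left, Function.update_of_ne (Ne.symm htj),
        Function.comp_apply, Equiv.swap_apply_left]
    · rw [Equiv.swap_apply_of_ne_of_ne hti htj, Function.update_of_ne hti,
        Function.comp_apply, Equiv.swap_apply_of_ne_of_ne hti htj]

lemma update_last_comp_castSucc {m : ℕ} (u : Fin (m+1) → ℝ) (z : ℝ) :
    (fun i : Fin m => Function.update u (Fin.last m) z i.castSucc)
      = fun i : Fin m => u i.castSucc := by
  funext i
  exact Function.update_of_ne (Fin.castSucc_lt_last i).ne z u

lemma ofFn_update_last {m : ℕ} (u : Fin (m+1) → ℝ) (z : ℝ) :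
    List.ofFn (Function.update u (Fin.last m) z)
      = (List.ofFn (fun i : Fin m => u i.castSucc)) ++ [z] := by
  rw [List.ofFn_succ']
  rw [List.concat_eq_append]
  congr 1
  · rw [update_last_comp_castSucc]
  · rw [Function.update_self]


theorem main_ind : ∀ k : ℕ, ∀ f : ℝ → ℝ,
    (∀ l : List ℝ, l.length = k → Continuous (D l f)) →
    ∃ g H : ℝ → ℝ, Continuous g ∧ (∀ l : List ℝ, l.length = k + 1 → D l H = fun _ => 0) ∧
      H 0 = 0 ∧ ∀ x, f x = g x + H x := by
  intro k
  induction k with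
  | zero =>
    intro f hf
    exact ⟨f, fun _ => 0, hf [] rfl, fun l hl => D_zero l, rfl, fun x => by simp⟩
  | succ m ih =>
    intro f hf
    -- Step 1 : the difference in direction 1 and its decomposition
    have hu : ∀ l : List ℝ, l.length = m → Continuous (D l (simpleDiff 1 f)) := by
      intro l hl
      have h1 : D l (simpleDiff 1 f) = D ((1:ℝ) :: l) f := rfl
      rw [h1]
      exact hf _ (by simp [hl])
    obtain ⟨v, K, hv, hK, hK0, huvK⟩ := ih (simpleDiff 1 f) hu
    set V : ℝ → ℝ := coB v with hVdef
    have hVc : Continuous V := coB_continuous v hv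
    have hVstep : ∀ x, V (x + 1) - V x = v x := coB_step v
    set f₁ : ℝ → ℝ := fun x => f x - V x with hf₁def
    have hf₁K : simpleDiff 1 f₁ = K := by
      funext x
      have h1 := huvK x
      have h2 := hVstep x
      simp only [simpleDiff, hf₁def] at h1 ⊢
      linarith
    have hDf₁ : ∀ l : List ℝ, l.length = m + 1 → Continuous (D l f₁) := by
      intro l hl
      have h1 : D l f₁ = fun x => D l f x - D l V x := D_sub l f V
      rw [h1]
      exact (hf l hl).sub (D_continuous l hVc)
    have hper : ∀ l : List ℝ, l.length = m + 1 → ∀ x, D l f₁ (x + 1) = D l f₁ x := by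
      intro l hl x
      have h1 : D l (simpleDiff 1 f₁) = simpleDiff 1 (D l f₁) := D_simpleDiff l 1 f₁
      rw [hf₁K, hK l hl] at h1
      have h2 := congrFun h1.symm x
      simp only [simpleDiff] at h2
      linarith
    -- the multiadditive mean
    set cf : (Fin (m+1) → ℝ) → ℝ := fun h => ∫ t in (0:ℝ)..1, D (List.ofFn h) f₁ t with hcf
    have hcfper : ∀ (vv : Fin (m+1) → ℝ) (σ : Equiv.Perm (Fin (m+1))),
        cf (vv ∘ σ) = cf vv := by
      intro vv σ
      simp only [hcf]
      rw [D_perm (ofFn_perm vv σ) f₁]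
    have hintadd : ∀ (L : List ℝ), L.length = m → ∀ a b : ℝ,
        (∫ t in (0:ℝ)..1, D (L ++ [a + b]) f₁ t)
          = (∫ t in (0:ℝ)..1, D (L ++ [a]) f₁ t) + ∫ t in (0:ℝ)..1, D (L ++ [b]) f₁ t := by
      intro L hL a b
      have hca : Continuous (D (L ++ [a]) f₁) := hDf₁ _ (by simp [hL])
      have hcb : Continuous (D (L ++ [b]) f₁) := hDf₁ _ (by simp [hL])
      calc (∫ t in (0:ℝ)..1, D (L ++ [a+b]) f₁ t)
          = ∫ t in (0:ℝ)..1, (D (L ++ [a]) f₁ (t + b) + D (L ++ [b]) f₁ t) := by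
            apply intervalIntegral.integral_congr
            intro t _
            show D (L ++ [a+b]) f₁ t = D (L ++ [a]) f₁ (t + b) + D (L ++ [b]) f₁ t
            rw [D_concat_apply, D_concat_apply, D_concat_apply]
            have e1 : t + (a+b) = t + b + a := by ring
            rw [e1]
            ring
        _ = (∫ t in (0:ℝ)..1, D (L ++ [a]) f₁ (t + b))
              + ∫ t in (0:ℝ)..1, D (L ++ [b]) f₁ t := by
            apply intervalIntegral.integral_add
            · exact ((hca.comp (continuous_add_right b))).intervalIntegrable 0 1
            · exact hcb.intervalIntegrable 0 1
        _ = _ := by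
            congr 1
            exact per_shift _ hca (fun x => hper _ (by simp [hL]) x) b
    have hcfadd : ∀ (vv : Fin (m+1) → ℝ) (i : Fin (m+1)) (a b : ℝ),
        cf (Function.update vv i (a + b))
          = cf (Function.update vv i a) + cf (Function.update vv i b) := by
      intro vv i a b
      have hred : ∀ z : ℝ, cf (Function.update vv i z)
          = cf (Function.update (vv ∘ (Equiv.swap i (Fin.last m))) (Fin.last m) z) := by
        intro z
        rw [← hcfper (Function.update vv i z) (Equiv.swap i (Fin.last m)),
          update_comp_swap]
      rw [hred, hred, hred]
      simp only [hcf]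
      rw [ofFn_update_last, ofFn_update_last, ofFn_update_last]
      exact hintadd _ (by simp) a b
    -- the top layer
    set Hd : ℝ → ℝ := PD cf [] with hHd
    set H₂ : ℝ → ℝ := fun x => (((m+1).factorial : ℝ))⁻¹ * Hd x with hH₂
    set f₂ : ℝ → ℝ := fun x => f₁ x - H₂ x with hf₂def
    have hcfL : ∀ (L : List ℝ), L.length = m + 1 → ∀ y : ℝ,
        cf (pdVec L y) = ∫ t in (0:ℝ)..1, D L f₁ t := by
      intro L hL y
      simp only [hcf]
      rw [ofFn_pdVec L hL y]
    have hDf₂ : ∀ l' : List ℝ, l'.length = m → Continuous (D l' f₂) := by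
      intro l' hl'
      set w₀ : ℝ → ℝ := D l' f₁ with hw₀
      set κ : ℝ := D l' K 0 with hκ
      have hKconst : ∀ x, D l' K x = κ := by
        intro x
        have h1 : D (l' ++ [x]) K = fun _ => 0 := hK _ (by simp [hl'])
        have h2 := congrFun h1 0
        rw [D_concat_apply] at h2
        simp only [zero_add] at h2
        rw [hκ]
        linarith
      have hstep : ∀ x, w₀ (x + 1) - w₀ x = κ := by
        intro x
        have h1 : D l' (simpleDiff 1 f₁) = simpleDiff 1 w₀ := D_simpleDiff l' 1 f₁
        rw [hf₁K] at h1
        have h2 := congrFun h1 x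
        simp only [simpleDiff] at h2
        rw [← h2, hKconst x]
      set wA : ℝ → ℝ := fun x => w₀ x - κ * x with hwA
      have hperA : ∀ x, wA (x + 1) = wA x := by
        intro x
        have h := hstep x
        simp only [hwA]
        ring_nf
        ring_nf at h
        linarith
      have hdA : ∀ y : ℝ, Continuous (fun x => wA (x + y) - wA x) := by
        intro y
        have h1 : (fun x => wA (x + y) - wA x) = fun x => D (l' ++ [y]) f₁ x - κ * y := by
          funext x
          rw [D_concat_apply]
          simp only [hwA, hw₀]
          ring
        rw [h1]
        exact (hDf₁ _ (by simp [hl'])).sub continuous_const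
      have hstar := star wA hperA hdA
      set φ : ℝ → ℝ := fun y => ∫ t in (0:ℝ)..1, D (l' ++ [y]) f₁ t with hφ
      have hint : ∀ x : ℝ, (∫ t in (0:ℝ)..1, (wA (t + x) - wA t)) = φ x - κ * x := by
        intro x
        have h1 : ∀ t : ℝ, wA (t + x) - wA t = D (l' ++ [x]) f₁ t - κ * x := by
          intro t
          rw [D_concat_apply]
          simp only [hwA, hw₀]
          ring
        rw [intervalIntegral.integral_congr (g := fun t => D (l' ++ [x]) f₁ t - κ * x)
          (fun t _ => h1 t)]
        rw [intervalIntegral.integral_sub ((hDf₁ _ (by simp [hl'])).intervalIntegrable 0 1)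
          (intervalIntegrable_const)]
        simp [hφ]
      have hρ : Continuous (fun x => w₀ x - φ x) := by
        have h1 : (fun x => w₀ x - φ x)
            = fun x => wA x - ∫ t in (0:ℝ)..1, (wA (t + x) - wA t) := by
          funext x
          rw [hint x]
          simp only [hwA]
          ring
        rw [h1]
        exact hstar
      set ψ : ℝ → ℝ := D l' H₂ with hψ
      have hψincr : ∀ y x : ℝ, ψ (x + y) - ψ x = φ y := by
        intro y x
        have h1 : ψ (x + y) - ψ x = D (l' ++ [y]) H₂ x := (D_concat_apply l' y H₂ x).symm
        rw [h1, hH₂]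
        have h2 : D (l' ++ [y]) (fun x => (((m+1).factorial : ℝ))⁻¹ * Hd x) x
            = (((m+1).factorial : ℝ))⁻¹ * D (l' ++ [y]) Hd x := D_smul_apply _ _ _ x
        rw [h2, hHd]
        rw [PD_D_full cf hcfadd hcfper (l' ++ [y]) []
          (by simp only [List.length_nil, List.length_append, List.length_singleton, hl']; omega)
          x 0]
        rw [List.nil_append]
        rw [hcfL (l' ++ [y]) (by simp [hl']) 0]
        have h3 : ((m+1).factorial : ℝ) ≠ 0 := Nat.cast_ne_zero.mpr (Nat.factorial_ne_zero _)
        have h4 : (l' ++ [y]).length = m + 1 := by simp [hl']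
        rw [h4]
        simp only [hφ]
        field_simp
      have hφincr : ∀ y x : ℝ, φ (x + y) - φ x = φ y := by
        intro y x
        have h1 := hintadd l' hl' x y
        simp only [hφ]
        linarith
      have hχ : ∀ x, ψ x - φ x = ψ 0 - φ 0 := by
        intro x
        have h1 := hψincr x 0
        have h2 := hφincr x 0
        simp only [zero_add] at h1 h2
        linarith
      have hDl' : D l' f₂ = fun x => (w₀ x - φ x) - (ψ 0 - φ 0) := by
        have h1 : D l' f₂ = fun x => D l' f₁ x - D l' H₂ x := by
          rw [hf₂def]
          exact D_sub l' f₁ H₂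
        rw [h1]
        funext x
        have h2 := hχ x
        simp only [hw₀, hψ] at h2 ⊢
        linarith
      rw [hDl']
      exact hρ.sub continuous_const
    obtain ⟨g₃, H₃, hg₃, hH₃, hH₃0, hfg₃⟩ := ih f₂ hDf₂
    refine ⟨fun x => V x + g₃ x, fun x => H₂ x + H₃ x, hVc.add hg₃, ?_, ?_, ?_⟩
    · intro l hl
      have h1 : D l (fun x => H₂ x + H₃ x) = fun x => D l H₂ x + D l H₃ x := D_add l H₂ H₃
      rw [h1]
      have h2 : D l H₂ = fun _ => 0 := by
        have h3 : D l Hd = fun _ => 0 := by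
          rw [hHd]
          exact PD_D_zero cf hcfadd hcfper l [] (by simp) (by simp [hl])
        have h4 : D l H₂ = fun x => (((m+1).factorial : ℝ))⁻¹ * D l Hd x := by
          rw [hH₂]
          exact D_smul l _ Hd
        rw [h4, h3]
        funext x
        simp
      have h5 : D l H₃ = fun _ => 0 := by
        have e : D l H₃ = D (l.take (m+1) ++ l.drop (m+1)) H₃ := by
          rw [List.take_append_drop]
        rw [e, D_append, hH₃ _ (by rw [List.length_take]; omega), D_zero]
      rw [h2, h5]
      funext x
      simp
    · have h1 : Hd 0 = 0 := by
        rw [hHd]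
        simp only [PD]
        have e0 : pdVec (n := m+1) [] 0 = fun _ => (0:ℝ) := by
          funext t
          simp [pdVec]
        rw [e0]
        simp only [hcf]
        rw [List.ofFn_const]
        have e1 : List.replicate (m+1) (0:ℝ) = 0 :: List.replicate m 0 := rfl
        rw [e1, D_cons]
        have e2 : simpleDiff 0 f₁ = fun _ => (0:ℝ) := by
          funext x
          simp [simpleDiff]
        rw [e2, D_zero]
        simp
      simp only [hH₂, h1, hH₃0]
      simp
    · intro x
      have h1 := hfg₃ x
      simp only [hf₂def, hf₁def] at h1
      show f x = (V x + g₃ x) + (H₂ x + H₃ x)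
      linarith

lemma mixedDiff_eq_D : ∀ (k : ℕ) (h : Fin k → ℝ) (f : ℝ → ℝ),
    mixedDiff k h f = D (List.ofFn h) f := by
  intro k
  induction k with
  | zero => intro h f; rfl
  | succ k ihk =>
    intro h f
    show simpleDiff (h (Fin.last k)) (mixedDiff k (fun i => h i.castSucc) f) = _
    rw [ihk]
    rw [List.ofFn_succ' h, List.concat_eq_append, D_concat]

lemma iterate_simpleDiff (h : ℝ) : ∀ (nn : ℕ) (f : ℝ → ℝ),
    (simpleDiff h)^[nn] f = D (List.replicate nn h) f := by
  intro nn
  induction nn with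
  | zero => intro f; rfl
  | succ nn ihn =>
    intro f
    rw [Function.iterate_succ_apply, ihn (simpleDiff h f)]
    rfl

end

end DP

/-- Theorem 3.1: if every mixed difference of order `k` of `f : ℝ → ℝ` is continuous,
then `f = g + H` with `g` continuous and `H` a polynomial function of order `k`
vanishing at `0`. -/
theorem difference_property_of_kth_order (k : ℕ) (hk : 1 ≤ k) (f : ℝ → ℝ)
    (hf : ∀ h : Fin k → ℝ, Continuous (mixedDiff k h f)) :
    ∃ g H : ℝ → ℝ, Continuous g ∧ IsPolynomialFunction k H ∧ H 0 = 0 ∧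
      ∀ x : ℝ, f x = g x + H x := by
  have hf' : ∀ l : List ℝ, l.length = k → Continuous (DP.D l f) := by
    intro l hl
    have h1 := hf (fun i : Fin k => l.get (Fin.cast hl.symm i))
    rw [DP.mixedDiff_eq_D] at h1
    have h2 : List.ofFn (fun i : Fin k => l.get (Fin.cast hl.symm i)) = l := by
      apply List.ext_getElem
      · simp [hl]
      · intro i hi1 hi2
        simp [List.getElem_ofFn, List.get_eq_getElem]
    rwa [h2] at h1
  obtain ⟨g, H, hg, hH, hH0, hfgH⟩ := DP.main_ind k f hf'
  refine ⟨g, H, hg, ?_, hH0, hfgH⟩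
  intro x h
  rw [DP.iterate_simpleDiff]
  rw [hH (List.replicate (k+1) h) (by simp)]
end

section
/- Let k ≥ 1 and p ≥ 1, let f : ℝ → ℝ be a polynomial function of order k, and fix real numbers ξ₁, …, ξ_p. Then the function g(x₁,…,x_p) = f(ξ₁x₁ + ⋯ + ξ_p x_p), considered on the set ℚᵖ of vectors with rational coordinates, is an ordinary polynomial of degree at most k; that is, there exists a real multivariate polynomial P in p variables of total degree at most k such that f(ξ₁x₁ + ⋯ + ξ_p x_p) = P(x₁,…,x_p) for all (x₁,…,x_p) ∈ ℚᵖ. -/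
open Polynomial

/-- Discrete difference operator on `ℤ`-indexed sequences. -/
def dZ {R : Type*} [Ring R] (u : ℤ → R) : ℤ → R := fun t => u (t + 1) - u t

lemma dZ_apply {R : Type*} [Ring R] (u : ℤ → R) (t : ℤ) : dZ u t = u (t + 1) - u t := rfl

lemma dZ_const {R : Type*} [Ring R] {u : ℤ → R} (h : ∀ t, dZ u t = 0) : ∀ t, u t = u 0 := by
  have step : ∀ t : ℤ, u (t + 1) = u t := by
    intro t
    have := h t
    rw [dZ_apply, sub_eq_zero] at this
    exact this
  intro t
  induction t using Int.induction_on with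
  | zero => rfl
  | succ n ih => rw [step, ih]
  | pred n ih => rw [← ih, ← step (-(n:ℤ) - 1)]; norm_num

lemma dZ_iterate_hom {R S : Type*} [Ring R] [Ring S] (φ : R →+* S) (m : ℕ) :
    ∀ (u : ℤ → R) (t : ℤ), dZ^[m] (fun a => φ (u a)) t = φ (dZ^[m] u t) := by
  induction m with
  | zero => intro u t; rfl
  | succ m ih =>
    intro u t
    rw [Function.iterate_succ_apply, Function.iterate_succ_apply]
    have : dZ (fun a => φ (u a)) = fun a => φ (dZ u a) := by
      funext a; simp [dZ_apply, map_sub]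
    rw [this, ih]

lemma descPoch_diff {R : Type*} [CommRing R] (n : ℕ) :
    (descPochhammer R (n + 1)).comp (X + 1) - descPochhammer R (n + 1)
      = ((n : R[X]) + 1) * descPochhammer R n := by
  have h1 : (descPochhammer R (n + 1)).comp (X + 1) = (X + 1) * descPochhammer R n := by
    rw [descPochhammer_succ_left, mul_comp, X_comp, Polynomial.comp_assoc, sub_comp, X_comp,
      one_comp, add_sub_cancel_right, comp_X]
  rw [h1, descPochhammer_succ_right]
  ring

set_option maxHeartbeats 1000000 in
lemma exists_antideriv {R : Type*} [CommRing R] [IsDomain R] [Algebra ℚ R] :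
    ∀ (n : ℕ) (q : R[X]), q.natDegree ≤ n →
      ∃ Q : R[X], Q.natDegree ≤ n + 1 ∧ Q.comp (X + 1) - Q = q := by
  intro n
  induction n with
  | zero =>
    intro q hq
    refine ⟨C (q.coeff 0) * X, ?_, ?_⟩
    · exact le_trans (natDegree_mul_le) (by simp)
    · rw [mul_comp, C_comp, X_comp]
      conv_rhs => rw [eq_C_of_natDegree_le_zero hq]
      ring
  | succ n ih =>
    intro q hq
    set c := q.coeff (n + 1) with hc
    have hdp : (descPochhammer R (n + 1)).natDegree = n + 1 := descPochhammer_natDegree R (n + 1)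
    set q2 : R[X] := q - C c * descPochhammer R (n + 1) with hq2def
    have hdeg2 : q2.natDegree ≤ n := by
      rw [natDegree_le_iff_coeff_eq_zero]
      intro N hN
      rw [hq2def, coeff_sub, coeff_C_mul]
      by_cases hNe : N = n + 1
      · subst hNe
        have h1 : (descPochhammer R (n + 1)).coeff (n + 1) = 1 := by
          have := (monic_descPochhammer R (n + 1)).coeff_natDegree
          rwa [hdp] at this
        rw [h1, mul_one, hc, sub_self]
      · have hlt : n + 1 < N := by omega
        rw [coeff_eq_zero_of_natDegree_lt (lt_of_le_of_lt hq hlt),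
          coeff_eq_zero_of_natDegree_lt (by rw [hdp]; exact hlt), mul_zero, sub_self]
    obtain ⟨Q2, hQ2deg, hQ2⟩ := ih _ hdeg2
    set D : R[X] := C c * descPochhammer R (n + 2) with hD
    set Q1 : R[X] := (((n : ℚ) + 2)⁻¹) • D with hQ1
    have hQ1comp : Q1.comp (X + 1) - Q1 = C c * descPochhammer R (n + 1) := by
      rw [hQ1, Polynomial.smul_comp, ← smul_sub, hD, mul_comp, C_comp, ← mul_sub,
        descPoch_diff (n + 1)]
      have h2 : ((((n + 1 : ℕ)) : R[X]) + 1) = algebraMap ℚ R[X] ((n : ℚ) + 2) := by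
        rw [show ((n : ℚ) + 2) = ((n + 2 : ℕ) : ℚ) by push_cast; ring, map_natCast]
        push_cast; ring
      rw [h2, ← mul_assoc, mul_comm (C c), mul_assoc, ← Algebra.smul_def, smul_smul,
        inv_mul_cancel₀ (by positivity), one_smul]
    refine ⟨Q2 + Q1, ?_, ?_⟩
    · refine le_trans (natDegree_add_le _ _) (max_le (le_trans hQ2deg (Nat.le_succ _)) ?_)
      rw [hQ1, Algebra.smul_def, Polynomial.algebraMap_apply, hD]
      refine le_trans (natDegree_mul_le) ?_
      rw [natDegree_C]
      refine le_trans (Nat.zero_add _).le ?_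
      refine le_trans (natDegree_mul_le) ?_
      rw [descPochhammer_natDegree]
      simp
    · rw [add_comp]
      have hre : Q2.comp (X + 1) + Q1.comp (X + 1) - (Q2 + Q1)
          = (Q2.comp (X + 1) - Q2) + (Q1.comp (X + 1) - Q1) := by ring
      rw [hre, hQ2, hQ1comp, hq2def]
      ring

lemma newton_seq {R : Type*} [CommRing R] [IsDomain R] [Algebra ℚ R] :
    ∀ (n : ℕ) (u : ℤ → R), (∀ t, dZ^[n + 1] u t = 0) →
      ∃ q : R[X], q.natDegree ≤ n ∧ ∀ t : ℤ, u t = q.eval (t : R) := by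
  intro n
  induction n with
  | zero =>
    intro u h
    refine ⟨C (u 0), by simp, fun t => ?_⟩
    rw [eval_C]
    exact dZ_const (by simpa using h) t
  | succ n ih =>
    intro u h
    obtain ⟨qv, hqvdeg, hqv⟩ := ih (dZ u) (fun t => by
      have ht := h t; rwa [Function.iterate_succ_apply] at ht)
    obtain ⟨Q, hQdeg, hQ⟩ := exists_antideriv n qv hqvdeg
    set q : R[X] := Q + C (u 0 - Q.eval 0) with hqdef
    have hqdeg : q.natDegree ≤ n + 1 := by
      refine le_trans (natDegree_add_le _ _) (max_le hQdeg ?_)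
      simp
    refine ⟨q, hqdeg, ?_⟩
    have hw : ∀ t : ℤ, dZ (fun t : ℤ => u t - q.eval (t : R)) t = 0 := by
      intro t
      simp only [dZ_apply]
      have he : q.eval ((t + 1 : ℤ) : R) - q.eval ((t : ℤ) : R) = qv.eval ((t : ℤ) : R) := by
        have harg : ((t + 1 : ℤ) : R) = Polynomial.eval ((t : ℤ) : R) (X + 1) := by
          push_cast; simp
        rw [harg, ← eval_comp, ← eval_sub, hqdef]
        have hcomp : (Q + C (u 0 - Q.eval 0)).comp (X + 1) - (Q + C (u 0 - Q.eval 0))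
            = Q.comp (X + 1) - Q := by
          rw [add_comp, C_comp]; ring
        rw [hcomp, hQ]
      have hd := hqv t
      rw [dZ_apply] at hd
      rw [← he] at hd
      linear_combination hd
    intro t
    have hz := dZ_const hw t
    have h0 : u 0 - q.eval ((0 : ℤ) : R) = 0 := by
      rw [hqdef]; push_cast; simp
    exact sub_eq_zero.mp (hz.trans h0)

lemma cast_cons {p : ℕ} (a : ℤ) (t : Fin p → ℤ) :
    (fun i => (((Fin.cons a t : Fin (p + 1) → ℤ)) i : ℝ))
      = Fin.cons (a : ℝ) (fun j => (t j : ℝ)) := by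
  funext i
  refine Fin.cases ?_ ?_ i <;> simp

lemma mv_eq_zero_of_int_vanish :
    ∀ (p : ℕ) (P : MvPolynomial (Fin p) ℝ),
      (∀ t : Fin p → ℤ, MvPolynomial.eval (fun i => (t i : ℝ)) P = 0) → P = 0 := by
  intro p
  induction p with
  | zero =>
    intro P h
    obtain ⟨c, rfl⟩ := MvPolynomial.C_surjective (Fin 0) P
    have := h fun _ => 0
    rw [MvPolynomial.eval_C] at this
    rw [this, map_zero]
  | succ p ih =>
    intro P h
    have key : ∀ i, (MvPolynomial.finSuccEquiv ℝ p P).coeff i = 0 := by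
      intro i
      apply ih
      intro t
      set r : Polynomial ℝ :=
        (MvPolynomial.finSuccEquiv ℝ p P).map (MvPolynomial.eval fun j => (t j : ℝ)) with hr
      have hr0 : r = 0 := by
        apply Polynomial.eq_zero_of_infinite_isRoot
        apply Set.infinite_of_injective_forall_mem (f := fun a : ℤ => (a : ℝ))
          (hi := Int.cast_injective)
        intro a
        show r.IsRoot (a : ℝ)
        have := h (Fin.cons a t)
        rw [cast_cons, MvPolynomial.eval_eq_eval_mv_eval'] at this
        exact this
      have := congrArg (fun s : Polynomial ℝ => s.coeff i) hr0
      simpa [hr, Polynomial.coeff_map] using this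
    have hfz : MvPolynomial.finSuccEquiv ℝ p P = 0 := Polynomial.ext fun i => by
      rw [key i, Polynomial.coeff_zero]
    have := congrArg (MvPolynomial.finSuccEquiv ℝ p).symm hfz
    simpa using this

lemma multivar_newton (k : ℕ) :
    ∀ (p : ℕ) (G : (Fin p → ℤ) → ℝ),
      (∀ (i : Fin p) (t : Fin p → ℤ) (a : ℤ),
        dZ^[k + 1] (fun j => G (Function.update t i j)) a = 0) →
      ∃ P : MvPolynomial (Fin p) ℝ,
        ∀ t, G t = MvPolynomial.eval (fun i => (t i : ℝ)) P := by
  intro p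
  induction p with
  | zero =>
    intro G _
    exact ⟨MvPolynomial.C (G 0), fun t => by
      rw [MvPolynomial.eval_C]
      exact congrArg G (Subsingleton.elim _ _)⟩
  | succ p ih =>
    intro G hG
    have H : ∀ a : ℤ, ∃ Pa : MvPolynomial (Fin p) ℝ,
        ∀ t, G (Fin.cons a t) = MvPolynomial.eval (fun i => (t i : ℝ)) Pa := by
      intro a
      apply ih (fun t => G (Fin.cons a t))
      intro i t b
      have hb := hG i.succ (Fin.cons a t) b
      have harr : (fun j => G (Function.update (Fin.cons a t) i.succ j))
          = fun j => G (Fin.cons a (Function.update t i j)) := by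
        funext j
        rw [Fin.cons_update]
      rwa [harr] at hb
    choose u hu using H
    have hdu : ∀ a, dZ^[k + 1] u a = 0 := by
      intro a
      apply mv_eq_zero_of_int_vanish
      intro t
      have hcomm := dZ_iterate_hom
        ((MvPolynomial.eval fun i => (t i : ℝ)) : MvPolynomial (Fin p) ℝ →+* ℝ) (k + 1) u a
      rw [← hcomm]
      have harr : (fun a => (MvPolynomial.eval fun i => (t i : ℝ)) (u a))
          = fun a => G (Fin.cons a t) := funext fun a => (hu a t).symm
      rw [harr]
      have h0 := hG 0 (Fin.cons 0 t) a
      have harr2 : (fun j => G (Function.update (Fin.cons (0 : ℤ) t) 0 j))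
          = fun j => G (Fin.cons j t) := by
        funext j
        rw [Fin.update_cons_zero]
      rwa [harr2] at h0
    obtain ⟨q, hqdeg, hq⟩ := newton_seq k u hdu
    refine ⟨(MvPolynomial.finSuccEquiv ℝ p).symm q, fun t => ?_⟩
    have ht : t = Fin.cons (t 0) (Fin.tail t) := (Fin.cons_self_tail t).symm
    calc G t = G (Fin.cons (t 0) (Fin.tail t)) := by rw [← ht]
      _ = MvPolynomial.eval (fun i => (Fin.tail t i : ℝ)) (u (t 0)) := hu (t 0) (Fin.tail t)
      _ = MvPolynomial.eval (fun i => (Fin.tail t i : ℝ)) (q.eval ((t 0 : ℤ) : MvPolynomial (Fin p) ℝ)) := by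
          rw [hq (t 0)]
      _ = Polynomial.eval ((t 0 : ℤ) : ℝ)
            (q.map ((MvPolynomial.eval fun i => (Fin.tail t i : ℝ)) : MvPolynomial (Fin p) ℝ →+* ℝ)) := by
          rw [Polynomial.eval_map, Polynomial.eval₂_at_intCast]
      _ = MvPolynomial.eval (fun i => (t i : ℝ)) ((MvPolynomial.finSuccEquiv ℝ p).symm q) := by
          conv_lhs => rw [← (MvPolynomial.finSuccEquiv ℝ p).apply_symm_apply q]
          rw [← MvPolynomial.eval_eq_eval_mv_eval', ← cast_cons, ← ht]

lemma eval_mul_homComponent {p : ℕ} (P : MvPolynomial (Fin p) ℝ) (d : ℕ) (y : ℝ)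
    (x : Fin p → ℝ) :
    MvPolynomial.eval (fun i => y * x i) (MvPolynomial.homogeneousComponent d P)
      = y ^ d * MvPolynomial.eval x (MvPolynomial.homogeneousComponent d P) := by
  rw [MvPolynomial.homogeneousComponent_apply, map_sum, map_sum, Finset.mul_sum]
  apply Finset.sum_congr rfl
  intro m hm
  simp only [Finset.mem_filter] at hm
  rw [MvPolynomial.eval_monomial, MvPolynomial.eval_monomial, ← hm.2]
  rw [Finsupp.prod, Finsupp.prod]
  simp_rw [mul_pow]
  rw [Finset.prod_mul_distrib, Finset.prod_pow_eq_pow_sum]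
  rw [Finsupp.degree_apply]
  ring
lemma dZ_simpleDiff (m : ℕ) : ∀ (f : ℝ → ℝ) (c h : ℝ) (a : ℤ),
    dZ^[m] (fun j : ℤ => f (c + j * h)) a = (simpleDiff h)^[m] f (c + a * h) := by
  induction m with
  | zero => intro f c h a; rfl
  | succ m ih =>
    intro f c h a
    rw [Function.iterate_succ_apply]
    have harr : dZ (fun j : ℤ => f (c + j * h)) = fun j : ℤ => (simpleDiff h f) (c + j * h) := by
      funext j
      rw [dZ_apply]
      show f (c + ((j + 1 : ℤ) : ℝ) * h) - f (c + (j : ℝ) * h)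
        = f (c + (j : ℝ) * h + h) - f (c + (j : ℝ) * h)
      have : c + ((j + 1 : ℤ) : ℝ) * h = c + (j : ℝ) * h + h := by push_cast; ring
      rw [this]
    rw [harr, ih (simpleDiff h f) c h a, Function.iterate_succ_apply]

lemma dZ_line {k : ℕ} {f : ℝ → ℝ} (hf : IsPolynomialFunction k f) (c h : ℝ) (a : ℤ) :
    dZ^[k + 1] (fun j : ℤ => f (c + j * h)) a = 0 := by
  rw [dZ_simpleDiff]
  exact hf (c + a * h) h

lemma eval_bind₁' {p : ℕ} (v : Fin p → ℝ) (g : Fin p → MvPolynomial (Fin p) ℝ)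
    (φ : MvPolynomial (Fin p) ℝ) :
    MvPolynomial.eval v (MvPolynomial.bind₁ g φ)
      = MvPolynomial.eval (fun i => MvPolynomial.eval v (g i)) φ := by
  simpa using MvPolynomial.eval₂Hom_bind₁ (RingHom.id ℝ) v g φ


/-- Lemma 3.1: if `f` is a polynomial function of order `k`, then for any fixed reals
`ξ₁, …, ξ_p` the function `(x₁, …, x_p) ↦ f (ξ₁ x₁ + ⋯ + ξ_p x_p)`, restricted to
rational vectors, is an ordinary polynomial of total degree at most `k`. -/
theorem polynomialFunction_ridge_on_rationals (k p : ℕ) (hk : 1 ≤ k) (hp : 1 ≤ p)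
    (f : ℝ → ℝ) (hf : IsPolynomialFunction k f) (ξ : Fin p → ℝ) :
    ∃ P : MvPolynomial (Fin p) ℝ, P.totalDegree ≤ k ∧
      ∀ x : Fin p → ℚ,
        f (∑ i : Fin p, ξ i * (x i : ℝ)) =
          MvPolynomial.eval (fun i => (x i : ℝ)) P := by
  classical
  set G : ℝ → (Fin p → ℤ) → ℝ := fun ε t => f (∑ i, (t i : ℝ) * (ξ i * ε)) with hGdef
  -- coordinate lines
  have hline : ∀ (ε : ℝ) (i : Fin p) (t : Fin p → ℤ) (a : ℤ),
      dZ^[k + 1] (fun j => G ε (Function.update t i j)) a = 0 := by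
    intro ε i t a
    have harr : (fun j : ℤ => G ε (Function.update t i j))
        = fun j : ℤ => f ((∑ i' ∈ Finset.univ.erase i, (t i' : ℝ) * (ξ i' * ε))
            + (j : ℝ) * (ξ i * ε)) := by
      funext j
      rw [hGdef]
      simp only
      congr 1
      rw [← Finset.sum_erase_add Finset.univ _ (Finset.mem_univ i), Function.update_self]
      congr 1
      apply Finset.sum_congr rfl
      intro i' hi'
      rw [Function.update_of_ne (Finset.ne_of_mem_erase hi')]
    rw [harr]
    exact dZ_line hf _ _ a
  -- direction lines
  have hdir : ∀ (ε : ℝ) (s : Fin p → ℤ) (a : ℤ),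
      dZ^[k + 1] (fun j : ℤ => G ε (fun i => j * s i)) a = 0 := by
    intro ε s a
    have harr : (fun j : ℤ => G ε (fun i => j * s i))
        = fun j : ℤ => f (0 + (j : ℝ) * (∑ i, (s i : ℝ) * (ξ i * ε))) := by
      funext j
      rw [hGdef]
      simp only
      congr 1
      rw [zero_add, Finset.mul_sum]
      apply Finset.sum_congr rfl
      intro i _
      push_cast
      ring
    rw [harr]
    exact dZ_line hf _ _ a
  obtain ⟨P1, hP1⟩ := multivar_newton k p (G 1) (hline 1)
  -- vanishing of high homogeneous components
  have hcomp0 : ∀ d, k < d → MvPolynomial.homogeneousComponent d P1 = 0 := by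
    intro d hd
    by_cases hD : d ≤ P1.totalDegree
    · apply mv_eq_zero_of_int_vanish
      intro s
      set cf : ℕ → ℝ := fun d' =>
        MvPolynomial.eval (fun i => (s i : ℝ)) (MvPolynomial.homogeneousComponent d' P1) with hcf
      set W : Polynomial ℝ := ∑ d' ∈ Finset.range (P1.totalDegree + 1), C (cf d') * X ^ d'
        with hW
      have hWeval : ∀ y : ℝ, W.eval y = MvPolynomial.eval (fun i => y * (s i : ℝ)) P1 := by
        intro y
        rw [hW, eval_finset_sum]
        conv_rhs => rw [← MvPolynomial.sum_homogeneousComponent P1, map_sum]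
        apply Finset.sum_congr rfl
        intro d' _
        rw [eval_mul_homComponent, eval_mul, eval_C, eval_pow, eval_X, hcf]
        ring
      obtain ⟨r, hrdeg, hr⟩ := newton_seq k (fun j : ℤ => G 1 (fun i => j * s i)) (hdir 1 s)
      have hWr : W = r := by
        rw [← sub_eq_zero]
        apply Polynomial.eq_zero_of_infinite_isRoot
        apply Set.infinite_of_injective_forall_mem (f := fun a : ℤ => (a : ℝ))
          (hi := Int.cast_injective)
        intro j
        show (W - r).IsRoot ((j : ℤ) : ℝ)
        have h1 : W.eval ((j : ℤ) : ℝ) = r.eval ((j : ℤ) : ℝ) := by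
          have harg : (fun i => ((j : ℤ) : ℝ) * ((s i : ℤ) : ℝ))
              = fun i => ((j * s i : ℤ) : ℝ) := by
            funext i; push_cast; ring
          rw [hWeval, harg, ← hr j, hP1 (fun i => j * s i)]
        simp [Polynomial.IsRoot, h1]
      have hcoeff : W.coeff d = cf d := by
        rw [hW, finset_sum_coeff]
        rw [Finset.sum_eq_single d]
        · rw [coeff_C_mul, coeff_X_pow, if_pos rfl, mul_one]
        · intro b _ hb
          rw [coeff_C_mul, coeff_X_pow, if_neg (Ne.symm hb), mul_zero]
        · intro hmem
          exact absurd (Finset.mem_range.mpr (by omega)) hmem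
      have : W.coeff d = 0 := by
        rw [hWr]
        exact coeff_eq_zero_of_natDegree_lt (lt_of_le_of_lt hrdeg hd)
      rw [hcoeff] at this
      exact this
    · exact MvPolynomial.homogeneousComponent_eq_zero d P1 (by omega)
  have hdeg : P1.totalDegree ≤ k := by
    rw [MvPolynomial.totalDegree]
    apply Finset.sup_le
    intro m hm
    by_contra hgt
    push_neg at hgt
    have hdm : (m.sum fun _ e => e) = Finsupp.degree m := by
      rw [Finsupp.degree, Finsupp.sum]
      rfl
    have hcc := MvPolynomial.coeff_homogeneousComponent (Finsupp.degree m) P1 m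
    rw [hcomp0 (Finsupp.degree m) (by rw [← hdm]; exact hgt), MvPolynomial.coeff_zero, if_pos rfl] at hcc
    exact (MvPolynomial.mem_support_iff.mp hm) hcc.symm
  refine ⟨P1, hdeg, ?_⟩
  intro x
  set N : ℕ := ∏ i, (x i).den with hN
  have hNpos : 0 < N := Finset.prod_pos fun i _ => (x i).pos
  have hNne : (N : ℝ) ≠ 0 := Nat.cast_ne_zero.mpr hNpos.ne'
  have hmex : ∀ i, ∃ m : ℤ, (m : ℝ) = (x i : ℝ) * N := by
    intro i
    obtain ⟨c, hc⟩ := Finset.dvd_prod_of_mem (fun i => (x i).den) (Finset.mem_univ i)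
    refine ⟨(x i).num * c, ?_⟩
    rw [← hN] at hc
    rw [hc]
    push_cast
    rw [Rat.cast_def]
    field_simp
  choose mm hmm using hmex
  obtain ⟨PN, hPN⟩ := multivar_newton k p (G ((N : ℝ)⁻¹)) (hline ((N : ℝ)⁻¹))
  set S : MvPolynomial (Fin p) ℝ :=
    MvPolynomial.bind₁ (fun i => MvPolynomial.C (N : ℝ) * MvPolynomial.X i) PN with hS
  have hSeval : ∀ v : Fin p → ℝ, MvPolynomial.eval v S
      = MvPolynomial.eval (fun i => (N : ℝ) * v i) PN := by
    intro v
    rw [hS, eval_bind₁']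
    have harg : (fun i => MvPolynomial.eval v (MvPolynomial.C (N : ℝ) * MvPolynomial.X i))
        = fun i => (N : ℝ) * v i := by
      funext i
      rw [map_mul, MvPolynomial.eval_C, MvPolynomial.eval_X]
    rw [harg]
  have hSP : S = P1 := by
    rw [← sub_eq_zero]
    apply mv_eq_zero_of_int_vanish
    intro t
    rw [map_sub, hSeval, sub_eq_zero]
    have h1 : (fun i => (N : ℝ) * ((t i : ℤ) : ℝ)) = fun i => (((N : ℤ) * t i : ℤ) : ℝ) := by
      funext i; push_cast; ring
    rw [h1, ← hPN (fun i => (N : ℤ) * t i), ← hP1 t]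
    rw [hGdef]
    simp only
    congr 1
    apply Finset.sum_congr rfl
    intro i _
    push_cast
    field_simp
  have hfinal : MvPolynomial.eval (fun i => ((x i : ℚ) : ℝ)) P1
      = f (∑ i, ξ i * ((x i : ℚ) : ℝ)) := by
    rw [← hSP, hSeval]
    have h2 : (fun i => (N : ℝ) * ((x i : ℚ) : ℝ)) = fun i => ((mm i : ℤ) : ℝ) := by
      funext i
      rw [hmm i]
      ring
    rw [h2, ← hPN mm, hGdef]
    simp only
    congr 1
    apply Finset.sum_congr rfl
    intro i _
    rw [hmm i]
    field_simp
  exact hfinal.symm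
end

section
/- Let k ≥ 1 and let f : ℝ → ℝ be a polynomial function of order k. Then there exists a polynomial function H : ℝ → ℝ of order k+1 such that H(0) = 0 and f(x) = H(x+1) − H(x) for all x ∈ ℝ. -/
open Finset Function fwdDiff

/-- zero iterates -/
lemma fwdDiff_iter_zero_fn (c : ℝ) (m : ℕ) :
    Δ_[c] ^[m] (fun _ : ℝ => (0:ℝ)) = fun _ => 0 := by
  induction m with
  | zero => rfl
  | succ m ih =>
    rw [Function.iterate_succ_apply]
    have : Δ_[c] (fun _ : ℝ => (0:ℝ)) = fun _ => 0 := by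
      funext x; simp [fwdDiff]
    rw [this, ih]

def Pz (n : ℕ) (f : ℝ → ℝ) : Prop := ∀ (c : ℝ) (x : ℝ), Δ_[c] ^[n] f x = 0

lemma Pz.fn_eq {n : ℕ} {f : ℝ → ℝ} (hf : Pz n f) (c : ℝ) :
    Δ_[c] ^[n] f = fun _ => 0 := funext (hf c)

lemma Pz.mono {n m : ℕ} {f : ℝ → ℝ} (hf : Pz n f) (hnm : n ≤ m) : Pz m f := by
  intro c x
  rw [show m = (m - n) + n by omega, Function.iterate_add_apply, hf.fn_eq c,
    fwdDiff_iter_zero_fn]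

lemma fwdDiff_comm (a b : ℝ) (f : ℝ → ℝ) :
    Δ_[a] (Δ_[b] f) = Δ_[b] (Δ_[a] f) := by
  funext x
  simp only [fwdDiff]
  rw [add_right_comm]
  ring

lemma fwdDiff_iter_comm (a b : ℝ) (m : ℕ) (f : ℝ → ℝ) :
    Δ_[a] ^[m] (Δ_[b] f) = Δ_[b] (Δ_[a] ^[m] f) := by
  induction m with
  | zero => rfl
  | succ m ih =>
    rw [Function.iterate_succ_apply', ih, fwdDiff_comm, Function.iterate_succ_apply']

lemma fwdDiff_iter_iter_comm (a b : ℝ) (m i : ℕ) (f : ℝ → ℝ) :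
    Δ_[a] ^[m] (Δ_[b] ^[i] f) = Δ_[b] ^[i] (Δ_[a] ^[m] f) := by
  induction i with
  | zero => rfl
  | succ i ih =>
    rw [Function.iterate_succ_apply', fwdDiff_iter_comm, ih,
      Function.iterate_succ_apply']

lemma Pz.diff_iter {n : ℕ} {f : ℝ → ℝ} (hf : Pz n f) (b : ℝ) (i : ℕ) :
    Pz n (Δ_[b] ^[i] f) := by
  intro c x
  rw [fwdDiff_iter_iter_comm, hf.fn_eq c, fwdDiff_iter_zero_fn]

lemma Pz.add {n : ℕ} {f g : ℝ → ℝ} (hf : Pz n f) (hg : Pz n g) :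
    Pz n (fun x => f x + g x) := by
  intro c x
  have : (fun x => f x + g x) = f + g := rfl
  rw [this, fwdDiff_iter_add, Pi.add_apply, hf c x, hg c x, add_zero]

lemma Pz.smul {n : ℕ} {f : ℝ → ℝ} (hf : Pz n f) (r : ℝ) :
    Pz n (fun x => r * f x) := by
  intro c x
  have : (fun x => r * f x) = r • f := rfl
  rw [this, fwdDiff_iter_const_smul, Pi.smul_apply, hf c x, smul_zero]

lemma fwdDiff_translate (c h : ℝ) (f : ℝ → ℝ) :
    Δ_[h] (fun x => f (x + c)) = fun x => Δ_[h] f (x + c) := by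
  funext x; simp only [fwdDiff, add_right_comm]

lemma fwdDiff_iter_translate (c h : ℝ) (m : ℕ) (f : ℝ → ℝ) :
    Δ_[h] ^[m] (fun x => f (x + c)) = fun x => Δ_[h] ^[m] f (x + c) := by
  induction m generalizing f with
  | zero => rfl
  | succ m ih =>
    rw [Function.iterate_succ_apply, fwdDiff_translate, ih]
    funext x
    rw [Function.iterate_succ_apply]

lemma Pz.translate {n : ℕ} {f : ℝ → ℝ} (hf : Pz n f) (c : ℝ) :
    Pz n (fun x => f (x + c)) := by
  intro b x
  rw [fwdDiff_iter_translate]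
  exact hf b (x + c)

/-- truncated Gregory-Newton for Pz functions -/
lemma newton_trunc {N : ℕ} {F : ℝ → ℝ} (hF : Pz N F) (c y : ℝ) (j : ℕ) :
    F (y + (j : ℝ) * c) = ∑ l ∈ range N, (j.choose l : ℝ) * Δ_[c] ^[l] F y := by
  have h1 : F (y + (j:ℝ) * c) = ∑ l ∈ range (j+1), (j.choose l : ℝ) * Δ_[c] ^[l] F y := by
    have := shift_eq_sum_fwdDiff_iter c F j y
    rw [nsmul_eq_mul] at this
    rw [this]
    exact Finset.sum_congr rfl fun l _ => by rw [nsmul_eq_mul]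
  have h2 : ∑ l ∈ range (j+1), (j.choose l : ℝ) * Δ_[c] ^[l] F y
      = ∑ l ∈ range (j+1+N), (j.choose l : ℝ) * Δ_[c] ^[l] F y := by
    apply Finset.sum_subset (Finset.range_subset_range.2 (by omega))
    intro l _ hl
    simp only [mem_range, not_lt] at hl
    rw [Nat.choose_eq_zero_of_lt (by omega), Nat.cast_zero, zero_mul]
  have h3 : ∑ l ∈ range N, (j.choose l : ℝ) * Δ_[c] ^[l] F y
      = ∑ l ∈ range (j+1+N), (j.choose l : ℝ) * Δ_[c] ^[l] F y := by
    apply Finset.sum_subset (Finset.range_subset_range.2 (by omega))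
    intro l _ hl
    simp only [mem_range, not_lt] at hl
    have : Δ_[c] ^[l] F y = 0 := by
      rw [show l = (l - N) + N by omega, Function.iterate_add_apply, hF.fn_eq c,
        fwdDiff_iter_zero_fn]
    rw [this, mul_zero]
  rw [h1, h2, ← h3]

lemma seq_fwdDiff_iter_zero_fn (m : ℕ) :
    Δ_[(1:ℕ)] ^[m] (fun _ : ℕ => (0:ℝ)) = fun _ => 0 := by
  induction m with
  | zero => rfl
  | succ m ih =>
    rw [Function.iterate_succ_apply]
    have : Δ_[(1:ℕ)] (fun _ : ℕ => (0:ℝ)) = fun _ => 0 := by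
      funext x; simp [fwdDiff]
    rw [this, ih]

/-- Δ of a monomial sequence -/
lemma seq_fwdDiff_monomial (k : ℕ) :
    Δ_[(1:ℕ)] (fun j : ℕ => (j:ℝ)^k)
      = fun j : ℕ => ∑ t ∈ range k, (k.choose t : ℝ) * (j:ℝ)^t := by
  funext j
  have : ((j+1:ℕ):ℝ) = (j:ℝ) + 1 := by push_cast; ring
  rw [fwdDiff, this, add_pow]
  rw [Finset.sum_range_succ]
  simp only [one_pow, mul_one, Nat.choose_self, Nat.cast_one]
  ring_nf

lemma seq_fwdDiff_iter_monomial_lt {k m : ℕ} (hkm : k < m) :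
    Δ_[(1:ℕ)] ^[m] (fun j : ℕ => (j:ℝ)^k) = fun _ => 0 := by
  induction k using Nat.strong_induction_on generalizing m with
  | _ k ih =>
    obtain ⟨m', rfl⟩ : ∃ m', m = m' + 1 := ⟨m - 1, by omega⟩
    rw [Function.iterate_succ_apply, seq_fwdDiff_monomial]
    have : (fun j : ℕ => ∑ t ∈ range k, (k.choose t : ℝ) * (j:ℝ)^t)
        = ∑ t ∈ range k, (k.choose t : ℝ) • (fun j : ℕ => (j:ℝ)^t) := by
      funext j; simp [Finset.sum_apply]
    rw [this, fwdDiff_iter_finset_sum]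
    funext j
    rw [Finset.sum_apply]
    apply Finset.sum_eq_zero
    intro t ht
    simp only [mem_range] at ht
    rw [fwdDiff_iter_const_smul, ih t ht (by omega), Pi.smul_apply, smul_zero]

lemma seq_fwdDiff_iter_monomial_self (m : ℕ) :
    Δ_[(1:ℕ)] ^[m] (fun j : ℕ => (j:ℝ)^m) = fun _ => (m.factorial : ℝ) := by
  induction m with
  | zero => funext j; simp
  | succ m ih =>
    rw [Function.iterate_succ_apply, seq_fwdDiff_monomial]
    have : (fun j : ℕ => ∑ t ∈ range (m+1), ((m+1).choose t : ℝ) * (j:ℝ)^t)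
        = ∑ t ∈ range (m+1), ((m+1).choose t : ℝ) • (fun j : ℕ => (j:ℝ)^t) := by
      funext j; simp [Finset.sum_apply]
    rw [this, fwdDiff_iter_finset_sum]
    funext j
    rw [Finset.sum_apply, Finset.sum_range_succ]
    have h1 : ∀ t ∈ range m,
        Δ_[(1:ℕ)] ^[m] (((m+1).choose t : ℝ) • (fun j : ℕ => (j:ℝ)^t)) j = 0 := by
      intro t ht
      simp only [mem_range] at ht
      rw [fwdDiff_iter_const_smul, seq_fwdDiff_iter_monomial_lt ht, Pi.smul_apply, smul_zero]
    rw [Finset.sum_eq_zero h1, zero_add, fwdDiff_iter_const_smul, ih, Pi.smul_apply,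
      smul_eq_mul, Nat.choose_succ_self_right]
    rw [Nat.factorial_succ]
    push_cast
    ring

lemma choose_cast_key (l m : ℕ) :
    ((l:ℝ)+1) * ((m.choose (l+1)) : ℝ) = ((m:ℝ) - l) * (m.choose l : ℝ) := by
  rcases le_or_gt l m with hlm | hlm
  · have := Nat.choose_succ_right_eq m l
    have hcast : ((m.choose (l+1) * (l+1) : ℕ) : ℝ) = ((m.choose l * (m - l) : ℕ) : ℝ) := by
      exact_mod_cast congrArg (Nat.cast : ℕ → ℝ) this
    push_cast [Nat.cast_sub hlm] at hcast
    linarith [hcast]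
  · rw [Nat.choose_eq_zero_of_lt hlm, Nat.choose_eq_zero_of_lt (by omega)]
    simp

/-- binomial coefficients as real polynomials in m -/
lemma choose_poly_expansion (l : ℕ) :
    ∃ e : ℕ → ℝ, e l = ((l.factorial : ℝ))⁻¹ ∧
      ∀ m : ℕ, ((m.choose l) : ℝ) = ∑ t ∈ range (l+1), e t * (m:ℝ)^t := by
  induction l with
  | zero =>
    exact ⟨fun _ => 1, by simp, fun m => by simp⟩
  | succ l ih =>
    obtain ⟨e, hel, he⟩ := ih
    refine ⟨fun t => ((if t = 0 then (0:ℝ) else e (t-1)) -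
      (l:ℝ) * (if t < l + 1 then e t else 0)) / ((l:ℝ)+1), ?_, ?_⟩
    · simp only [Nat.add_sub_cancel, if_neg (Nat.succ_ne_zero l), if_neg (lt_irrefl (l+1))]
      rw [hel, mul_zero, sub_zero, Nat.factorial_succ]
      push_cast
      rw [mul_comm ((l:ℝ)+1)]
      rw [mul_inv]
      ring
    · intro m
      have key : ((l:ℝ)+1) * ((m.choose (l+1)) : ℝ) = ((m:ℝ) - l) * (m.choose l : ℝ) :=
        choose_cast_key l m
      have hl1 : ((l:ℝ)+1) ≠ 0 := by positivity
      rw [eq_comm]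
      simp only []
      -- compute the sum
      have hs : ∑ t ∈ range (l+2), (((if t = 0 then (0:ℝ) else e (t-1)) -
            (l:ℝ) * (if t < l + 1 then e t else 0)) / ((l:ℝ)+1)) * (m:ℝ)^t
          = (((m:ℝ) - l) * ∑ t ∈ range (l+1), e t * (m:ℝ)^t) / ((l:ℝ)+1) := by
        rw [Finset.sum_congr rfl (fun t _ => div_mul_eq_mul_div _ _ _), ← Finset.sum_div]
        congr 1
        have expand : ∀ t ∈ range (l+2),
            ((if t = 0 then (0:ℝ) else e (t-1)) - (l:ℝ) * (if t < l + 1 then e t else 0))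
              * (m:ℝ)^t
            = (if t = 0 then (0:ℝ) else e (t-1)) * (m:ℝ)^t
              - (l:ℝ) * ((if t < l + 1 then e t else 0) * (m:ℝ)^t) := by
          intro t _; ring
        rw [Finset.sum_congr rfl expand, Finset.sum_sub_distrib, ← Finset.mul_sum]
        have hP : ∑ t ∈ range (l+2), (if t = 0 then (0:ℝ) else e (t-1)) * (m:ℝ)^t
            = (m:ℝ) * ∑ t ∈ range (l+1), e t * (m:ℝ)^t := by
          rw [Finset.sum_range_succ']
          have h0 : (if (0:ℕ) = 0 then (0:ℝ) else e (0-1)) * (m:ℝ)^(0:ℕ) = 0 := by simp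
          rw [h0, add_zero, Finset.mul_sum]
          apply Finset.sum_congr rfl
          intro t _
          rw [if_neg (Nat.succ_ne_zero t), Nat.add_sub_cancel]
          ring
        have hQ : ∑ t ∈ range (l+2), (if t < l + 1 then e t else 0) * (m:ℝ)^t
            = ∑ t ∈ range (l+1), e t * (m:ℝ)^t := by
          rw [Finset.sum_range_succ, if_neg (lt_irrefl (l+1)), zero_mul, add_zero]
          exact Finset.sum_congr rfl fun t ht => by
            rw [if_pos (mem_range.mp ht)]
        rw [hP, hQ]
        ring
      rw [hs, ← he, ← key, mul_div_cancel_left₀ _ hl1]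

lemma beta_lt {i l n : ℕ} (hln : l < n) :
    Δ_[(1:ℕ)] ^[n] (fun j : ℕ => (((i*j).choose l : ℕ) : ℝ)) = fun _ => 0 := by
  obtain ⟨e, _, he⟩ := choose_poly_expansion l
  have hrw : (fun j : ℕ => (((i*j).choose l : ℕ) : ℝ))
      = ∑ t ∈ range (l+1), (e t * (i:ℝ)^t) • (fun j : ℕ => (j:ℝ)^t) := by
    funext j
    rw [Finset.sum_apply, he (i*j)]
    apply Finset.sum_congr rfl
    intro t _
    push_cast
    rw [Pi.smul_apply, smul_eq_mul, mul_pow]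
    ring
  rw [hrw, fwdDiff_iter_finset_sum]
  funext j
  rw [Finset.sum_apply]
  apply Finset.sum_eq_zero
  intro t ht
  simp only [mem_range] at ht
  rw [fwdDiff_iter_const_smul, seq_fwdDiff_iter_monomial_lt (by omega), Pi.smul_apply, smul_zero]

lemma beta_eq (i n : ℕ) :
    Δ_[(1:ℕ)] ^[n] (fun j : ℕ => (((i*j).choose n : ℕ) : ℝ)) = fun _ => (i:ℝ)^n := by
  obtain ⟨e, hen, he⟩ := choose_poly_expansion n
  have hrw : (fun j : ℕ => (((i*j).choose n : ℕ) : ℝ))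
      = ∑ t ∈ range (n+1), (e t * (i:ℝ)^t) • (fun j : ℕ => (j:ℝ)^t) := by
    funext j
    rw [Finset.sum_apply, he (i*j)]
    apply Finset.sum_congr rfl
    intro t _
    push_cast
    rw [Pi.smul_apply, smul_eq_mul, mul_pow]
    ring
  rw [hrw, fwdDiff_iter_finset_sum]
  funext j
  rw [Finset.sum_apply, Finset.sum_range_succ]
  have h1 : ∀ t ∈ range n,
      Δ_[(1:ℕ)] ^[n] ((e t * (i:ℝ)^t) • (fun j : ℕ => (j:ℝ)^t)) j = 0 := by
    intro t ht
    simp only [mem_range] at ht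
    rw [fwdDiff_iter_const_smul, seq_fwdDiff_iter_monomial_lt ht, Pi.smul_apply, smul_zero]
  rw [Finset.sum_eq_zero h1, zero_add, fwdDiff_iter_const_smul, seq_fwdDiff_iter_monomial_self,
    Pi.smul_apply, smul_eq_mul, hen]
  have : (n.factorial : ℝ) ≠ 0 := by positivity
  field_simp

lemma crux_R2 {n : ℕ} {F : ℝ → ℝ} (hF : Pz (n+1) F) (g h : ℝ) (x : ℝ) :
    ∑ i ∈ range (n+2), ((-1:ℝ)^(n+1-i) * ((n+1).choose i : ℝ)) * (i:ℝ)^n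
        * Δ_[g] ^[n] F (x + (i:ℝ)*h) = 0 := by
  have hS : ∀ j : ℕ,
      ∑ i ∈ range (n+2), ∑ l ∈ range (n+1),
        (((-1:ℝ)^(n+1-i) * ((n+1).choose i : ℝ)) * Δ_[g] ^[l] F (x + (i:ℝ)*h))
          * (((i*j).choose l : ℕ) : ℝ) = 0 := by
    intro j
    have h0 := hF (h + (j:ℝ)*g) x
    rw [fwdDiff_iter_eq_sum_shift] at h0
    rw [← h0]
    apply Finset.sum_congr rfl
    intro i _
    have hpt : x + i • (h + (j:ℝ)*g) = (x + (i:ℝ)*h) + ((i*j : ℕ) : ℝ) * g := by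
      rw [nsmul_eq_mul]; push_cast; ring
    rw [hpt, newton_trunc hF g (x + (i:ℝ)*h) (i*j), zsmul_eq_mul, Finset.mul_sum]
    push_cast
    apply Finset.sum_congr rfl
    intro l _
    ring
  have hfun : (fun j : ℕ =>
      ∑ i ∈ range (n+2), ∑ l ∈ range (n+1),
        (((-1:ℝ)^(n+1-i) * ((n+1).choose i : ℝ)) * Δ_[g] ^[l] F (x + (i:ℝ)*h))
          * (((i*j).choose l : ℕ) : ℝ))
      = ∑ i ∈ range (n+2), ∑ l ∈ range (n+1),
          ((((-1:ℝ)^(n+1-i) * ((n+1).choose i : ℝ)) * Δ_[g] ^[l] F (x + (i:ℝ)*h))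
            • (fun j : ℕ => (((i*j).choose l : ℕ) : ℝ))) := by
    funext j
    rw [Finset.sum_apply]
    apply Finset.sum_congr rfl
    intro i _
    rw [Finset.sum_apply]
    apply Finset.sum_congr rfl
    intro l _
    simp
  have hkey := congrFun (congrArg (fun q => Δ_[(1:ℕ)] ^[n] q) (funext hS)) 0
  rw [hfun, seq_fwdDiff_iter_zero_fn, fwdDiff_iter_finset_sum] at hkey
  rw [Finset.sum_apply] at hkey
  have heval : ∀ i ∈ range (n+2),
      (Δ_[(1:ℕ)] ^[n] (∑ l ∈ range (n+1),
          ((((-1:ℝ)^(n+1-i) * ((n+1).choose i : ℝ)) * Δ_[g] ^[l] F (x + (i:ℝ)*h))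
            • (fun j : ℕ => (((i*j).choose l : ℕ) : ℝ))))) 0
      = ((-1:ℝ)^(n+1-i) * ((n+1).choose i : ℝ)) * (i:ℝ)^n * Δ_[g] ^[n] F (x + (i:ℝ)*h) := by
    intro i _
    rw [fwdDiff_iter_finset_sum, Finset.sum_apply, Finset.sum_range_succ]
    have hz : ∀ l ∈ range n,
        Δ_[(1:ℕ)] ^[n] ((((-1:ℝ)^(n+1-i) * ((n+1).choose i : ℝ)) * Δ_[g] ^[l] F (x + (i:ℝ)*h))
          • (fun j : ℕ => (((i*j).choose l : ℕ) : ℝ))) 0 = 0 := by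
      intro l hl
      rw [fwdDiff_iter_const_smul, Pi.smul_apply, beta_lt (mem_range.mp hl), smul_zero]
    rw [Finset.sum_eq_zero hz, zero_add, fwdDiff_iter_const_smul, Pi.smul_apply, beta_eq,
      smul_eq_mul]
    ring
  rw [Finset.sum_congr rfl heval] at hkey
  exact hkey

lemma crux_R3 {n : ℕ} {F : ℝ → ℝ} (hF : Pz (n+1) F) (g h : ℝ) (x : ℝ) :
    ∑ l ∈ range (n+1),
      (∑ i ∈ range (n+2), ((-1:ℝ)^(n+1-i) * ((n+1).choose i : ℝ)) * (i:ℝ)^n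
          * (i.choose l : ℝ)) * Δ_[h] ^[l] (Δ_[g] ^[n] F) x = 0 := by
  have hψ : Pz (n+1) (Δ_[g] ^[n] F) := hF.diff_iter g n
  have h2 := crux_R2 hF g h x
  have hexp : ∀ i ∈ range (n+2), ((-1:ℝ)^(n+1-i) * ((n+1).choose i : ℝ)) * (i:ℝ)^n
        * Δ_[g] ^[n] F (x + (i:ℝ)*h)
      = ∑ l ∈ range (n+1), ((-1:ℝ)^(n+1-i) * ((n+1).choose i : ℝ)) * (i:ℝ)^n
          * ((i.choose l : ℝ) * Δ_[h] ^[l] (Δ_[g] ^[n] F) x) := by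
    intro i _
    rw [← Finset.mul_sum, ← newton_trunc hψ h x i]
  rw [Finset.sum_congr rfl hexp, Finset.sum_comm] at h2
  rw [← h2]
  apply Finset.sum_congr rfl
  intro l _
  rw [Finset.sum_mul]
  apply Finset.sum_congr rfl
  intro i _
  ring

lemma kappa_zero (n : ℕ) :
    ∑ i ∈ range (n+2), ((-1:ℝ)^(n+1-i) * ((n+1).choose i : ℝ)) * (i:ℝ)^n
        * (i.choose 0 : ℝ) = 0 := by
  have h := congrFun (seq_fwdDiff_iter_monomial_lt (show n < n+1 by omega)) 0
  rw [fwdDiff_iter_eq_sum_shift] at h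
  rw [← h]
  apply Finset.sum_congr rfl
  intro i _
  rw [zsmul_eq_mul, Nat.choose_zero_right]
  push_cast
  simp

lemma kappa_one (n : ℕ) :
    ∑ i ∈ range (n+2), ((-1:ℝ)^(n+1-i) * ((n+1).choose i : ℝ)) * (i:ℝ)^n
        * (i.choose 1 : ℝ) = ((n+1).factorial : ℝ) := by
  have h := congrFun (seq_fwdDiff_iter_monomial_self (n+1)) 0
  rw [fwdDiff_iter_eq_sum_shift] at h
  rw [← h]
  apply Finset.sum_congr rfl
  intro i _
  rw [zsmul_eq_mul, Nat.choose_one_right]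
  push_cast
  simp
  ring

lemma down_induction {N : ℕ} {ψ : ℝ → ℝ} (hψ : Pz N ψ) (h : ℝ) {κ : ℕ → ℝ}
    (hκ0 : κ 0 = 0) (hκ1 : κ 1 = (N.factorial : ℝ))
    (hrel : ∀ x, ∑ l ∈ range N, κ l * Δ_[h] ^[l] ψ x = 0) :
    ∀ t m, m + t = N → 1 ≤ m → ∀ x, Δ_[h] ^[m] ψ x = 0 := by
  intro t
  induction t with
  | zero =>
    intro m hm _ x
    have : m = N := by omega
    subst this
    exact hψ h x
  | succ t ih =>
    intro m hm hm1 x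
    have hNm : 2 ≤ N := by omega
    have hrelfun : (fun x => ∑ l ∈ range N, κ l * Δ_[h] ^[l] ψ x) = fun _ => 0 := funext hrel
    have hsum : (fun x => ∑ l ∈ range N, κ l * Δ_[h] ^[l] ψ x)
        = ∑ l ∈ range N, κ l • Δ_[h] ^[l] ψ := by
      funext y
      rw [Finset.sum_apply]
      exact Finset.sum_congr rfl fun l _ => rfl
    have hkey := congrFun (congrArg (fun q => Δ_[h] ^[m-1] q) hrelfun) x
    rw [hsum, fwdDiff_iter_zero_fn, fwdDiff_iter_finset_sum, Finset.sum_apply] at hkey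
    have hterm : ∀ l ∈ range N, Δ_[h] ^[m-1] (κ l • Δ_[h] ^[l] ψ) x
        = κ l * Δ_[h] ^[(m-1)+l] ψ x := by
      intro l _
      rw [fwdDiff_iter_const_smul, Pi.smul_apply, smul_eq_mul, Function.iterate_add_apply]
    rw [Finset.sum_congr rfl hterm] at hkey
    have hsingle : ∀ l ∈ range N, l ≠ 1 → κ l * Δ_[h] ^[(m-1)+l] ψ x = 0 := by
      intro l _ hl1
      rcases Nat.eq_zero_or_pos l with rfl | hlpos
      · rw [hκ0, zero_mul]
      · have hl2 : 2 ≤ l := by omega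
        have : (m-1)+l = ((m-1)+l-(m+1)) + (m+1) := by omega
        rw [this, Function.iterate_add_apply]
        have hzero : Δ_[h] ^[m+1] ψ = fun _ => 0 :=
          funext (ih (m+1) (by omega) (by omega))
        rw [hzero, fwdDiff_iter_zero_fn]
        rw [mul_zero]
    rw [Finset.sum_eq_single_of_mem 1 (mem_range.mpr (by omega)) hsingle] at hkey
    have hm' : (m-1)+1 = m := by omega
    rw [hm', hκ1] at hkey
    have hfac : (N.factorial : ℝ) ≠ 0 := by positivity
    exact (mul_eq_zero.mp hkey).resolve_left hfac

lemma crux_main {n : ℕ} {F : ℝ → ℝ} (hF : Pz (n+1) F) (g h : ℝ) (x : ℝ) :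
    Δ_[h] (Δ_[g] ^[n] F) x = 0 := by
  rcases Nat.eq_zero_or_pos n with rfl | hn
  · exact hF h x
  · have hψ : Pz (n+1) (Δ_[g] ^[n] F) := hF.diff_iter g n
    have hrel : ∀ y, ∑ l ∈ range (n+1),
        (∑ i ∈ range (n+2), ((-1:ℝ)^(n+1-i) * ((n+1).choose i : ℝ)) * (i:ℝ)^n
          * (i.choose l : ℝ)) * Δ_[h] ^[l] (Δ_[g] ^[n] F) y = 0 :=
      fun y => crux_R3 hF g h y
    have := down_induction hψ h (κ := fun l => ∑ i ∈ range (n+2),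
        ((-1:ℝ)^(n+1-i) * ((n+1).choose i : ℝ)) * (i:ℝ)^n * (i.choose l : ℝ))
      (kappa_zero n) (kappa_one n) hrel n 1 (by omega) le_rfl x
    rwa [Function.iterate_one] at this

lemma Pz.diff {n : ℕ} {F : ℝ → ℝ} (hF : Pz (n+1) F) (c : ℝ) : Pz n (Δ_[c] F) := by
  intro h x
  rw [fwdDiff_iter_comm]
  exact crux_main hF h c x

lemma Pz.zero_fn {n : ℕ} : Pz n (fun _ : ℝ => (0:ℝ)) := by
  intro c x
  rw [fwdDiff_iter_zero_fn]

lemma Pz.diff_iter_drop (c : ℝ) :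
    ∀ (i n : ℕ) (F : ℝ → ℝ), Pz (n+i) F → Pz n (Δ_[c] ^[i] F) := by
  intro i
  induction i with
  | zero => intro n F hF; exact hF
  | succ i ih =>
    intro n F hF
    have h1 : Pz (n+1) (Δ_[c] ^[i] F) := ih (n+1) F (by rwa [show n+1+i = n+(i+1) by omega])
    have h2 := h1.diff c
    intro b x
    rw [← Function.iterate_succ_apply' (Δ_[c]) i F] at h2
    exact h2 b x

lemma fwdDiff_mul (h : ℝ) (F G : ℝ → ℝ) :
    Δ_[h] (fun x => F x * G x)
      = fun x => F (x+h) * Δ_[h] G x + Δ_[h] F x * G x := by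
  funext x
  simp only [fwdDiff]
  ring

lemma Pz.mul : ∀ (s a b : ℕ), a + b = s → ∀ {F G : ℝ → ℝ}, Pz (a+1) F → Pz (b+1) G →
    Pz (a+b+1) (fun x => F x * G x) := by
  intro s
  induction s with
  | zero =>
    intro a b hab F G hF hG
    have ha : a = 0 := by omega
    have hb : b = 0 := by omega
    subst ha; subst hb
    intro c x
    rw [show (0+0+1 : ℕ) = 1 by omega, Function.iterate_one, fwdDiff_mul]
    have h1 : Δ_[c] G x = 0 := by have := hG c x; rwa [Function.iterate_one] at this
    have h2 : Δ_[c] F x = 0 := by have := hF c x; rwa [Function.iterate_one] at this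
    show F (x+c) * Δ_[c] G x + Δ_[c] F x * G x = 0
    rw [h1, h2]
    ring
  | succ s ih =>
    intro a b hab F G hF hG
    intro c x
    rw [show a+b+1 = s+1+1 by omega, Function.iterate_succ_apply, fwdDiff_mul]

    have hterm1 : Pz (s+1) (fun x => F (x+c) * Δ_[c] G x) := by
      rcases Nat.eq_zero_or_pos b with rfl | hb
      · have hG0 : ∀ x, Δ_[c] G x = 0 := by
          intro y; have := hG c y; rwa [Function.iterate_one] at this
        have : (fun x => F (x+c) * Δ_[c] G x) = fun _ => (0:ℝ) := by
          funext y; rw [hG0 y, mul_zero]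
        rw [this]
        exact Pz.zero_fn
      · obtain ⟨b', rfl⟩ : ∃ b', b = b' + 1 := ⟨b - 1, by omega⟩
        have h1 : Pz (a+1) (fun x => F (x + c)) := hF.translate c
        have h2 : Pz (b'+1) (Δ_[c] G) := hG.diff c
        have := ih a b' (by omega) h1 h2
        rwa [show a+b'+1 = s+1 by omega] at this
    have hterm2 : Pz (s+1) (fun x => Δ_[c] F x * G x) := by
      rcases Nat.eq_zero_or_pos a with rfl | ha
      · have hF0 : ∀ x, Δ_[c] F x = 0 := by
          intro y; have := hF c y; rwa [Function.iterate_one] at this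
        have : (fun x => Δ_[c] F x * G x) = fun _ => (0:ℝ) := by
          funext y; rw [hF0 y, zero_mul]
        rw [this]
        exact Pz.zero_fn
      · obtain ⟨a', rfl⟩ : ∃ a', a = a' + 1 := ⟨a - 1, by omega⟩
        have h2 : Pz (a'+1) (Δ_[c] F) := hF.diff c
        have := ih a' b (by omega) h2 hG
        rwa [show a'+b+1 = s+1 by omega] at this
    have := (hterm1.add hterm2) c x
    have heq : (fun x => F (x+c) * Δ_[c] G x + Δ_[c] F x * G x)
        = (fun x => (fun x => F (x+c) * Δ_[c] G x) x + (fun x => Δ_[c] F x * G x) x) := rfl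
    rw [heq]
    exact this

lemma Pz.linear (c : ℝ) : Pz 2 (fun x : ℝ => x + c) := by
  intro b x
  show Δ_[b] (Δ_[b] (fun x : ℝ => x + c)) x = 0
  have : Δ_[b] (fun x : ℝ => x + c) = fun _ => b := by
    funext y; simp [fwdDiff]
  rw [this]
  simp [fwdDiff]

lemma Pz.prod_linear : ∀ i : ℕ, Pz (i+2) (fun x : ℝ => ∏ j ∈ range (i+1), (x + (j:ℝ))) := by
  intro i
  induction i with
  | zero =>
    have : (fun x : ℝ => ∏ j ∈ range 1, (x + (j:ℝ))) = fun x : ℝ => x + 0 := by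
      funext x; rw [Finset.prod_range_one, Nat.cast_zero]
    rw [this]
    exact Pz.linear 0
  | succ i ih =>
    have : (fun x : ℝ => ∏ j ∈ range (i+2), (x + (j:ℝ)))
        = fun x : ℝ => (∏ j ∈ range (i+1), (x + (j:ℝ))) * (x + ((i+1:ℕ):ℝ)) := by
      funext x; rw [Finset.prod_range_succ]
    rw [this]
    have := Pz.mul (i+2) (i+1) 1 (by omega) ih (Pz.linear ((i+1:ℕ):ℝ))
    rwa [show i+1+1+1 = i+3 by omega] at this

lemma Pz.sum {ι : Type*} (s : Finset ι) (F : ι → ℝ → ℝ) {n : ℕ}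
    (h : ∀ i ∈ s, Pz n (F i)) : Pz n (fun x => ∑ i ∈ s, F i x) := by
  intro c x
  have : (fun x => ∑ i ∈ s, F i x) = ∑ i ∈ s, F i := by
    funext y; rw [Finset.sum_apply]
  rw [this, fwdDiff_iter_finset_sum, Finset.sum_apply]
  exact Finset.sum_eq_zero fun i hi => h i hi c x

noncomputable def pfun (i : ℕ) : ℝ → ℝ :=
  fun x => ((-1:ℝ)^i / (((i+1).factorial : ℕ) : ℝ)) * ∏ j ∈ range (i+1), (x + (j:ℝ))

noncomputable def Hfun (k : ℕ) (f : ℝ → ℝ) : ℝ → ℝ :=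
  fun x => ∑ i ∈ range (k+1), pfun i x * Δ_[1] ^[i] f x

lemma pfun_pz (i : ℕ) : Pz (i+2) (pfun i) := by
  have := (Pz.prod_linear i).smul ((-1:ℝ)^i / (((i+1).factorial : ℕ) : ℝ))
  exact this

lemma pfun_zero (i : ℕ) : pfun i 0 = 0 := by
  unfold pfun
  rw [Finset.prod_eq_zero (Finset.mem_range.mpr (Nat.succ_pos i)) (by norm_num), mul_zero]

lemma Hfun_pz {k : ℕ} {f : ℝ → ℝ} (hf : Pz (k+1) f) : Pz (k+2) (Hfun k f) := by
  unfold Hfun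
  apply Pz.sum
  intro i hi
  have hik : i ≤ k := by simpa using Nat.lt_succ_iff.mp (Finset.mem_range.mp hi)
  have hg : Pz (k+1-i) (Δ_[1] ^[i] f) := by
    apply Pz.diff_iter_drop 1 i (k+1-i) f
    rwa [show k+1-i+i = k+1 by omega]
  have hp : Pz ((i+1)+1) (pfun i) := pfun_pz i
  have hgb : Pz ((k-i)+1) (Δ_[1] ^[i] f) := by rwa [show (k-i)+1 = k+1-i by omega]
  have := Pz.mul ((i+1)+(k-i)) (i+1) (k-i) rfl hp hgb
  rwa [show (i+1)+(k-i)+1 = k+2 by omega] at this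

lemma Hfun_zero (k : ℕ) (f : ℝ → ℝ) : Hfun k f 0 = 0 := by
  unfold Hfun
  exact Finset.sum_eq_zero fun i _ => by rw [pfun_zero, zero_mul]

lemma pfun_diff_zero (x : ℝ) : pfun 0 (x+1) - pfun 0 x = 1 := by
  unfold pfun
  simp [Finset.prod_range_one]

lemma pfun_diff_succ (i : ℕ) (x : ℝ) :
    pfun (i+1) (x+1) - pfun (i+1) x = - pfun i (x+1) := by
  unfold pfun
  have hQ1 : ∏ j ∈ range (i+2), (x + (j:ℝ))
      = (x + 0) * ∏ j ∈ range (i+1), ((x+1) + (j:ℝ)) := by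
    rw [Finset.prod_range_succ']
    rw [Finset.prod_congr rfl (fun j _ => by push_cast; ring_nf :
      ∀ j ∈ range (i+1), (x + ((j+1:ℕ):ℝ)) = ((x+1) + (j:ℝ)))]
    ring
  have hQ2 : ∏ j ∈ range (i+2), ((x+1) + (j:ℝ))
      = (∏ j ∈ range (i+1), ((x+1) + (j:ℝ))) * ((x+1) + ((i+1:ℕ):ℝ)) :=
    Finset.prod_range_succ _ _
  rw [hQ1, hQ2]
  have hfac : (((i+2).factorial : ℕ) : ℝ) = ((i+2):ℝ) * (((i+1).factorial : ℕ) : ℝ) := by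
    rw [Nat.factorial_succ]; push_cast; ring
  rw [hfac]
  have hne1 : (((i+1).factorial : ℕ) : ℝ) ≠ 0 := by positivity
  have hne2 : ((i+2):ℝ) ≠ 0 := by positivity
  field_simp
  push_cast
  ring

lemma Hfun_diff {k : ℕ} {f : ℝ → ℝ} (hf1 : ∀ x, Δ_[(1:ℝ)] ^[k+1] f x = 0) (x : ℝ) :
    Hfun k f (x+1) - Hfun k f x = f x := by
  unfold Hfun
  rw [← Finset.sum_sub_distrib]
  have hterm : ∀ i ∈ range (k+1),
      pfun i (x+1) * Δ_[1] ^[i] f (x+1) - pfun i x * Δ_[1] ^[i] f x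
      = (pfun i (x+1) - pfun i x) * Δ_[1] ^[i] f x + pfun i (x+1) * Δ_[1] ^[i+1] f x := by
    intro i _
    have hsucc : Δ_[(1:ℝ)] ^[i+1] f x = Δ_[1] ^[i] f (x+1) - Δ_[1] ^[i] f x := by
      rw [Function.iterate_succ_apply']
      rfl
    rw [hsucc]
    ring
  rw [Finset.sum_congr rfl hterm, Finset.sum_add_distrib]
  have hfirst : ∑ i ∈ range (k+1), (pfun i (x+1) - pfun i x) * Δ_[1] ^[i] f x
      = (∑ i ∈ range k, (- pfun i (x+1)) * Δ_[1] ^[i+1] f x) + f x := by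
    rw [Finset.sum_range_succ']
    congr 1
    · exact Finset.sum_congr rfl fun i _ => by rw [pfun_diff_succ]
    · rw [pfun_diff_zero, one_mul]
      rfl
  have hsecond : ∑ i ∈ range (k+1), pfun i (x+1) * Δ_[1] ^[i+1] f x
      = ∑ i ∈ range k, pfun i (x+1) * Δ_[1] ^[i+1] f x := by
    rw [Finset.sum_range_succ, hf1 x, mul_zero, add_zero]
  rw [hfirst, hsecond]
  rw [add_comm ((∑ i ∈ range k, (- pfun i (x+1)) * Δ_[1] ^[i+1] f x)) (f x), add_assoc,
    ← Finset.sum_add_distrib]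
  rw [Finset.sum_eq_zero (fun i _ => by ring : ∀ i ∈ range k,
    (- pfun i (x+1)) * Δ_[1] ^[i+1] f x + pfun i (x+1) * Δ_[1] ^[i+1] f x = 0), add_zero]

lemma simpleDiff_eq_fwdDiff : simpleDiff = fwdDiff (M := ℝ) (G := ℝ) := rfl

/-- Lemma 3.2: every polynomial function `f` of order `k` is the unit difference
`H (x + 1) - H x` of a polynomial function `H` of order `k + 1` with `H 0 = 0`. -/
theorem polynomialFunction_eq_unit_difference (k : ℕ) (hk : 1 ≤ k)
    (f : ℝ → ℝ) (hf : IsPolynomialFunction k f) :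
    ∃ H : ℝ → ℝ, IsPolynomialFunction (k + 1) H ∧ H 0 = 0 ∧
      ∀ x : ℝ, f x = H (x + 1) - H x := by
  have hPz : Pz (k+1) f := by
    intro c x
    have := hf x c
    rwa [simpleDiff_eq_fwdDiff] at this
  refine ⟨Hfun k f, ?_, Hfun_zero k f, ?_⟩
  · intro x h
    rw [simpleDiff_eq_fwdDiff]
    exact (Hfun_pz hPz) h x
  · intro x
    exact (Hfun_diff (fun y => hPz 1 y) x).symm
end
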